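/- arXiv:2601.14158 — 3 statements merged into one kernel-verified Lean document; each statement's English description precedes it below -/
import Mathlib

section
/- Local Diagonalization Lemma: Let d1, d2 ≥ 1 and let C be a Hermitian (d1·d2)×(d1·d2) complex matrix regarded as acting on ℂ^{d1}⊗ℂ^{d2}. Then there exist unitary matrices U2 ∈ U(d1) and U1 ∈ U(d2) such that the matrix Ĉ := (U2⊗U1) C (U2⊗U1)* satisfies: (i) Ĉ has the same eigenvalues (with multiplicity) as C; (ii) for i = 1, 2, tr_i[Ĉ] has the same eigenvalues (with multiplicity) as tr_i[C]; (iii) tr_1[Ĉ] and tr_2[Ĉ] are diagonal matrices; (iv) writing ĉ_k for the k-th diagonal entry of Ĉ (lexicographic index k = (i−1)d2 + s for the pair (i,s)), the multiset of eigenvalues of tr_1[C] equals { Σ_{s=1}^{d1} ĉ_{(s−1)d2+i} : i = 1, …, d2 } and the multiset of eigenvalues of tr_2[C] equals { Σ_{s=1}^{d2} ĉ_{(j−1)d2+s} : j = 1, …, d1 }. -/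
open Matrix Finset Kronecker
open scoped ComplexOrder

/-- The first partial trace of a matrix on `ℂ^{d1} ⊗ ℂ^{d2}` (index pairs `(i,s)` ordered
lexicographically): `(tr_1 C)_{s,t} = ∑_i C_{(i,s),(i,t)}`. -/
noncomputable def ptrace1 {d1 d2 : ℕ} (C : Matrix (Fin d1 × Fin d2) (Fin d1 × Fin d2) ℂ) :
    Matrix (Fin d2) (Fin d2) ℂ :=
  Matrix.of fun s t => ∑ i : Fin d1, C (i, s) (i, t)

/-- The second partial trace: `(tr_2 C)_{i,j} = ∑_s C_{(i,s),(j,s)}`. -/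
noncomputable def ptrace2 {d1 d2 : ℕ} (C : Matrix (Fin d1 × Fin d2) (Fin d1 × Fin d2) ℂ) :
    Matrix (Fin d1) (Fin d1) ℂ :=
  Matrix.of fun i j => ∑ s : Fin d2, C (i, s) (j, s)

/-- The sum of the `k` largest entries of the vector `x` (the largest value of a sum of `k`
entries of `x`), i.e. `∑_{i=1}^k x_i^↓`. -/
noncomputable def maxSum {ι : Type*} [Fintype ι] (x : ι → ℝ) (k : ℕ) : ℝ :=
  sSup {s : ℝ | ∃ A : Finset ι, A.card = k ∧ s = ∑ i ∈ A, x i}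

/-- `x ≺ y` (majorization): for every `k`, the sum of the `k` largest entries of `x` is at
most the sum of the `k` largest entries of `y`, and the total sums are equal. -/
def Majorizes {ι κ : Type*} [Fintype ι] [Fintype κ] (x : ι → ℝ) (y : κ → ℝ) : Prop :=
  (∀ k : ℕ, maxSum x k ≤ maxSum y k) ∧ ∑ i, x i = ∑ j, y j

/-- `x ≺_w y` (weak majorization). -/
def WeakMajorizes {ι κ : Type*} [Fintype ι] [Fintype κ] (x : ι → ℝ) (y : κ → ℝ) : Prop :=
  ∀ k : ℕ, maxSum x k ≤ maxSum y k

section Helpers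

open Polynomial

lemma map_univ_perm {ι : Type*} [Fintype ι] [DecidableEq ι] {α : Type*} (f : ι → α)
    (σ : Equiv.Perm ι) :
    Multiset.map (f ∘ σ) Finset.univ.val = Multiset.map f Finset.univ.val := by
  have h : Multiset.map (⇑σ) Finset.univ.val = Finset.univ.val := by
    have := Finset.map_univ_equiv σ
    calc Multiset.map (⇑σ) Finset.univ.val = (Finset.univ.map σ.toEmbedding).val := by
          rw [Finset.map_val]; rfl
      _ = Finset.univ.val := by rw [this]
  conv_rhs => rw [← h]
  rw [Multiset.map_map]

/-- permutation from multiset equality, Fin case -/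
lemma exists_perm_fin {n : ℕ} (f g : Fin n → ℝ)
    (h : Multiset.map f Finset.univ.val = Multiset.map g Finset.univ.val) :
    ∃ σ : Equiv.Perm (Fin n), f = g ∘ σ := by
  have h1 : List.ofFn (f ∘ Tuple.sort f) = List.ofFn (g ∘ Tuple.sort g) := by
    apply List.Perm.eq_of_sortedLE
      (Monotone.sortedLE_ofFn (Tuple.monotone_sort f))
      (Monotone.sortedLE_ofFn (Tuple.monotone_sort g))
    rw [← Multiset.coe_eq_coe, ← Fin.univ_val_map, ← Fin.univ_val_map,
      map_univ_perm f (Tuple.sort f), map_univ_perm g (Tuple.sort g), h]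
  have h2 : f ∘ Tuple.sort f = g ∘ Tuple.sort g := List.ofFn_inj.mp h1
  refine ⟨((Tuple.sort f).symm).trans (Tuple.sort g), ?_⟩
  funext i
  have := congrFun h2 ((Tuple.sort f).symm i)
  simpa using this

/-- permutation from multiset equality, general Fintype case -/
lemma exists_perm_of_multiset_eq {ι : Type*} [Fintype ι] [DecidableEq ι] (f g : ι → ℝ)
    (h : Multiset.map f Finset.univ.val = Multiset.map g Finset.univ.val) :
    ∃ σ : Equiv.Perm ι, f = g ∘ σ := by
  obtain ⟨n, e⟩ : ∃ n, Nonempty (ι ≃ Fin n) := ⟨_, ⟨Fintype.equivFin ι⟩⟩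
  obtain ⟨e⟩ := e
  have h' : Multiset.map (f ∘ e.symm) Finset.univ.val
      = Multiset.map (g ∘ e.symm) Finset.univ.val := by
    have h1 : Multiset.map (⇑e.symm) (Finset.univ.val : Multiset (Fin n))
        = (Finset.univ.val : Multiset ι) := by
      have := Finset.map_univ_equiv e.symm
      calc Multiset.map (⇑e.symm) Finset.univ.val
          = (Finset.univ.map e.symm.toEmbedding).val := by rw [Finset.map_val]; rfl
        _ = Finset.univ.val := by rw [this]
    rw [← Multiset.map_map f, ← Multiset.map_map g, h1, h]
  obtain ⟨τ, hτ⟩ := exists_perm_fin _ _ h'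
  refine ⟨e.trans (τ.trans e.symm), ?_⟩
  funext i
  have := congrFun hτ (e i)
  simpa using this

lemma charmatrix_diagonal' {n : Type*} [Fintype n] [DecidableEq n] (d : n → ℂ) :
    charmatrix (diagonal d) = diagonal (fun i => (X : ℂ[X]) - C (d i)) := by
  ext i j
  by_cases h : i = j
  · subst h; simp
  · simp [h, charmatrix_apply_ne _ _ _ h, diagonal_apply_ne _ h]

lemma charpoly_diagonal' {n : Type*} [Fintype n] [DecidableEq n] (d : n → ℂ) :
    (diagonal d).charpoly = ∏ i, ((X : ℂ[X]) - C (d i)) := by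
  rw [Matrix.charpoly, charmatrix_diagonal', det_diagonal]

lemma charpoly_unitary_conj {n : Type*} [Fintype n] [DecidableEq n]
    (U : Matrix n n ℂ) (hU : U ∈ Matrix.unitaryGroup n ℂ) (A : Matrix n n ℂ) :
    (U * A * Uᴴ).charpoly = A.charpoly := by
  have h1 : U * Uᴴ = 1 := Matrix.mem_unitaryGroup_iff.mp hU
  have h2 : Uᴴ * U = 1 := Matrix.mem_unitaryGroup_iff'.mp hU
  have key : charmatrix (U * A * Uᴴ) =
      (C : ℂ →+* ℂ[X]).mapMatrix U * charmatrix A * (C : ℂ →+* ℂ[X]).mapMatrix Uᴴ := by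
    rw [charmatrix, charmatrix, mul_sub, sub_mul]
    congr 1
    · rw [((Matrix.scalar_commute (X : ℂ[X]) (fun r' => Commute.all _ _)
          ((C : ℂ →+* ℂ[X]).mapMatrix U)).symm).eq, mul_assoc,
        ← map_mul ((C : ℂ →+* ℂ[X]).mapMatrix), h1]
      simp
    · rw [← map_mul ((C : ℂ →+* ℂ[X]).mapMatrix), ← map_mul ((C : ℂ →+* ℂ[X]).mapMatrix)]
  rw [Matrix.charpoly, Matrix.charpoly, key, det_mul, det_mul]
  have hdet : ((C : ℂ →+* ℂ[X]).mapMatrix U).det * ((C : ℂ →+* ℂ[X]).mapMatrix Uᴴ).det = 1 := by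
    rw [← det_mul, ← map_mul ((C : ℂ →+* ℂ[X]).mapMatrix), h1]
    simp
  calc ((C : ℂ →+* ℂ[X]).mapMatrix U).det * A.charmatrix.det
        * ((C : ℂ →+* ℂ[X]).mapMatrix Uᴴ).det
      = ((C : ℂ →+* ℂ[X]).mapMatrix U).det * ((C : ℂ →+* ℂ[X]).mapMatrix Uᴴ).det
        * A.charmatrix.det := by ring
    _ = A.charmatrix.det := by rw [hdet, one_mul]

/-- Hermitian matrices conjugate by a unitary have the same multiset of eigenvalues. -/
lemma eigenvalues_multiset_conj {n : Type*} [Fintype n] [DecidableEq n]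
    {A B : Matrix n n ℂ} (hA : A.IsHermitian) (hB : B.IsHermitian)
    {U : Matrix n n ℂ} (hU : U ∈ Matrix.unitaryGroup n ℂ) (h : B = U * A * Uᴴ) :
    Multiset.map hB.eigenvalues Finset.univ.val
      = Multiset.map hA.eigenvalues Finset.univ.val := by
  have hcp : ∀ (M : Matrix n n ℂ) (hM : M.IsHermitian),
      M.charpoly = ∏ i, ((X : ℂ[X]) - C (hM.eigenvalues i : ℂ)) := by
    intro M hM
    conv_lhs => rw [hM.spectral_theorem, Unitary.conjStarAlgAut_apply]
    rw [show (star (hM.eigenvectorUnitary : Matrix n n ℂ))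
        = (hM.eigenvectorUnitary : Matrix n n ℂ)ᴴ from rfl,
      charpoly_unitary_conj _ hM.eigenvectorUnitary.2, charpoly_diagonal']
    rfl
  have hB' : B.charpoly = A.charpoly := by rw [h, charpoly_unitary_conj _ hU]
  have heq : (∏ i, ((X : ℂ[X]) - C (hB.eigenvalues i : ℂ)))
      = ∏ i, ((X : ℂ[X]) - C (hA.eigenvalues i : ℂ)) := by
    rw [← hcp A hA, ← hcp B hB, hB']
  have hroots : ∀ (f : n → ℂ),
      (∏ i, ((X : ℂ[X]) - C (f i))).roots = Multiset.map f Finset.univ.val := by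
    intro f
    rw [show (∏ i, ((X : ℂ[X]) - C (f i)))
        = ((Multiset.map f Finset.univ.val).map fun a => (X : ℂ[X]) - C a).prod by
      rw [Multiset.map_map]; rfl]
    exact roots_multiset_prod_X_sub_C _
  have := (hroots (fun i => (hB.eigenvalues i : ℂ))).symm.trans
    (heq ▸ hroots (fun i => (hA.eigenvalues i : ℂ)))
  have hinj : Function.Injective (fun x : ℝ => (x : ℂ)) := Complex.ofReal_injective
  apply Multiset.map_injective hinj
  rw [Multiset.map_map, Multiset.map_map]
  simpa [Function.comp_def] using this

lemma ptrace1_conj {d1 d2 : ℕ} (U2 : Matrix (Fin d1) (Fin d1) ℂ)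
    (U1 : Matrix (Fin d2) (Fin d2) ℂ) (hU2 : U2 ∈ Matrix.unitaryGroup (Fin d1) ℂ)
    (C : Matrix (Fin d1 × Fin d2) (Fin d1 × Fin d2) ℂ) :
    ptrace1 ((U2 ⊗ₖ U1) * C * (U2 ⊗ₖ U1)ᴴ) = U1 * ptrace1 C * U1ᴴ := by
  have h2 : U2ᴴ * U2 = 1 := Matrix.mem_unitaryGroup_iff'.mp hU2
  have hδ : ∀ j k : Fin d1, (∑ i, U2 i j * star (U2 i k)) = if k = j then 1 else 0 := by
    intro j k
    have : (U2ᴴ * U2) k j = if k = j then 1 else 0 := by rw [h2, Matrix.one_apply]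
    rw [← this, Matrix.mul_apply]
    exact Finset.sum_congr rfl fun i _ => by rw [Matrix.conjTranspose_apply]; ring
  ext s t
  show (∑ i : Fin d1, ((U2 ⊗ₖ U1) * C * (U2 ⊗ₖ U1)ᴴ) (i, s) (i, t)) = _
  calc
    (∑ i : Fin d1, ((U2 ⊗ₖ U1) * C * (U2 ⊗ₖ U1)ᴴ) (i, s) (i, t))
        = ∑ i : Fin d1, ∑ p : Fin d1 × Fin d2, ∑ q : Fin d1 × Fin d2,
            (U2 i q.1 * star (U2 i p.1)) *
              (U1 s q.2 * C q p * star (U1 t p.2)) := by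
      refine Finset.sum_congr rfl fun i _ => ?_
      simp only [Matrix.mul_apply, Matrix.conjTranspose_apply, Matrix.kroneckerMap_apply,
        Finset.sum_mul]
      refine Finset.sum_congr rfl fun p _ => Finset.sum_congr rfl fun q _ => ?_
      rw [star_mul']
      ring
    _ = ∑ p : Fin d1 × Fin d2, ∑ q : Fin d1 × Fin d2,
          (∑ i : Fin d1, U2 i q.1 * star (U2 i p.1)) *
            (U1 s q.2 * C q p * star (U1 t p.2)) := by
      rw [Finset.sum_comm]
      refine Finset.sum_congr rfl fun p _ => ?_
      rw [Finset.sum_comm]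
      refine Finset.sum_congr rfl fun q _ => ?_
      rw [Finset.sum_mul]
    _ = ∑ p : Fin d1 × Fin d2, ∑ q : Fin d1 × Fin d2,
          (if p.1 = q.1 then (1:ℂ) else 0) * (U1 s q.2 * C q p * star (U1 t p.2)) := by
      refine Finset.sum_congr rfl fun p _ => Finset.sum_congr rfl fun q _ => ?_
      rw [hδ]
    _ = ∑ p : Fin d1 × Fin d2, ∑ u : Fin d2,
          U1 s u * C (p.1, u) p * star (U1 t p.2) := by
      refine Finset.sum_congr rfl fun p _ => ?_
      rw [Fintype.sum_prod_type]
      rw [Finset.sum_eq_single p.1]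
      · simp
      · intro j _ hj
        simp [Ne.symm hj, hj]
      · simp
    _ = (U1 * ptrace1 C * U1ᴴ) s t := by
      simp only [Matrix.mul_apply, Matrix.conjTranspose_apply, ptrace1, Matrix.of_apply,
        Finset.sum_mul, Finset.mul_sum]
      rw [Fintype.sum_prod_type]
      exact Finset.sum_comm.trans (Finset.sum_congr rfl fun y _ => Finset.sum_comm)

lemma ptrace2_conj {d1 d2 : ℕ} (U2 : Matrix (Fin d1) (Fin d1) ℂ)
    (U1 : Matrix (Fin d2) (Fin d2) ℂ) (hU1 : U1 ∈ Matrix.unitaryGroup (Fin d2) ℂ)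
    (C : Matrix (Fin d1 × Fin d2) (Fin d1 × Fin d2) ℂ) :
    ptrace2 ((U2 ⊗ₖ U1) * C * (U2 ⊗ₖ U1)ᴴ) = U2 * ptrace2 C * U2ᴴ := by
  have h2 : U1ᴴ * U1 = 1 := Matrix.mem_unitaryGroup_iff'.mp hU1
  have hδ : ∀ j k : Fin d2, (∑ s, U1 s j * star (U1 s k)) = if k = j then 1 else 0 := by
    intro j k
    have : (U1ᴴ * U1) k j = if k = j then 1 else 0 := by rw [h2, Matrix.one_apply]
    rw [← this, Matrix.mul_apply]
    exact Finset.sum_congr rfl fun i _ => by rw [Matrix.conjTranspose_apply]; ring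
  ext i j
  show (∑ s : Fin d2, ((U2 ⊗ₖ U1) * C * (U2 ⊗ₖ U1)ᴴ) (i, s) (j, s)) = _
  calc
    (∑ s : Fin d2, ((U2 ⊗ₖ U1) * C * (U2 ⊗ₖ U1)ᴴ) (i, s) (j, s))
        = ∑ s : Fin d2, ∑ p : Fin d1 × Fin d2, ∑ q : Fin d1 × Fin d2,
            (U1 s q.2 * star (U1 s p.2)) *
              (U2 i q.1 * C q p * star (U2 j p.1)) := by
      refine Finset.sum_congr rfl fun s _ => ?_
      simp only [Matrix.mul_apply, Matrix.conjTranspose_apply, Matrix.kroneckerMap_apply,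
        Finset.sum_mul]
      refine Finset.sum_congr rfl fun p _ => Finset.sum_congr rfl fun q _ => ?_
      rw [star_mul']
      ring
    _ = ∑ p : Fin d1 × Fin d2, ∑ q : Fin d1 × Fin d2,
          (∑ s : Fin d2, U1 s q.2 * star (U1 s p.2)) *
            (U2 i q.1 * C q p * star (U2 j p.1)) := by
      rw [Finset.sum_comm]
      refine Finset.sum_congr rfl fun p _ => ?_
      rw [Finset.sum_comm]
      refine Finset.sum_congr rfl fun q _ => ?_
      rw [Finset.sum_mul]
    _ = ∑ p : Fin d1 × Fin d2, ∑ q : Fin d1 × Fin d2,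
          (if p.2 = q.2 then (1:ℂ) else 0) * (U2 i q.1 * C q p * star (U2 j p.1)) := by
      refine Finset.sum_congr rfl fun p _ => Finset.sum_congr rfl fun q _ => ?_
      rw [hδ]
    _ = ∑ p : Fin d1 × Fin d2, ∑ u : Fin d1,
          U2 i u * C (u, p.2) p * star (U2 j p.1) := by
      refine Finset.sum_congr rfl fun p _ => ?_
      rw [Fintype.sum_prod_type]
      refine Finset.sum_congr rfl fun u _ => ?_
      rw [Finset.sum_eq_single p.2]
      · simp
      · intro v _ hv
        simp [Ne.symm hv, hv]
      · simp
    _ = (U2 * ptrace2 C * U2ᴴ) i j := by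
      simp only [Matrix.mul_apply, Matrix.conjTranspose_apply, ptrace2, Matrix.of_apply,
        Finset.sum_mul, Finset.mul_sum]
      rw [Fintype.sum_prod_type]
      exact Finset.sum_congr rfl fun x _ => Finset.sum_comm

lemma kron_conjTranspose {d1 d2 : ℕ} (A : Matrix (Fin d1) (Fin d1) ℂ)
    (B : Matrix (Fin d2) (Fin d2) ℂ) : (A ⊗ₖ B)ᴴ = Aᴴ ⊗ₖ Bᴴ := by
  ext ⟨i, s⟩ ⟨j, t⟩
  simp [Matrix.conjTranspose_apply, Matrix.kroneckerMap_apply, star_mul']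

lemma kron_unitary {d1 d2 : ℕ} {A : Matrix (Fin d1) (Fin d1) ℂ}
    {B : Matrix (Fin d2) (Fin d2) ℂ} (hA : A ∈ Matrix.unitaryGroup (Fin d1) ℂ)
    (hB : B ∈ Matrix.unitaryGroup (Fin d2) ℂ) :
    A ⊗ₖ B ∈ Matrix.unitaryGroup (Fin d1 × Fin d2) ℂ := by
  have hA' : A * Aᴴ = 1 := by
    rw [← Matrix.star_eq_conjTranspose]; exact Matrix.mem_unitaryGroup_iff.mp hA
  have hB' : B * Bᴴ = 1 := by
    rw [← Matrix.star_eq_conjTranspose]; exact Matrix.mem_unitaryGroup_iff.mp hB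
  rw [Matrix.mem_unitaryGroup_iff]
  rw [Matrix.star_eq_conjTranspose, kron_conjTranspose, ← Matrix.mul_kronecker_mul,
    hA', hB', Matrix.one_kronecker_one]

end Helpers

/-- **Local Diagonalization Lemma.** -/
theorem local_diagonalization (d1 d2 : ℕ) (hd1 : 1 ≤ d1) (hd2 : 1 ≤ d2)
    (C : Matrix (Fin d1 × Fin d2) (Fin d1 × Fin d2) ℂ) (hC : C.IsHermitian)
    (htr1 : (ptrace1 C).IsHermitian) (htr2 : (ptrace2 C).IsHermitian) :
    ∃ (U2 : Matrix (Fin d1) (Fin d1) ℂ) (U1 : Matrix (Fin d2) (Fin d2) ℂ),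
      U2 ∈ Matrix.unitaryGroup (Fin d1) ℂ ∧
      U1 ∈ Matrix.unitaryGroup (Fin d2) ℂ ∧
      ∀ (hChat : ((U2 ⊗ₖ U1) * C * (U2 ⊗ₖ U1)ᴴ).IsHermitian)
        (h1hat : (ptrace1 ((U2 ⊗ₖ U1) * C * (U2 ⊗ₖ U1)ᴴ)).IsHermitian)
        (h2hat : (ptrace2 ((U2 ⊗ₖ U1) * C * (U2 ⊗ₖ U1)ᴴ)).IsHermitian),
        -- (i) `Ĉ` has the same eigenvalues (with multiplicity) as `C`
        (∃ σ : Equiv.Perm (Fin d1 × Fin d2),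
            ∀ k, hChat.eigenvalues k = hC.eigenvalues (σ k)) ∧
        -- (ii) `tr_i Ĉ` has the same eigenvalues (with multiplicity) as `tr_i C`
        (∃ σ₁ : Equiv.Perm (Fin d2),
            ∀ s, h1hat.eigenvalues s = htr1.eigenvalues (σ₁ s)) ∧
        (∃ σ₂ : Equiv.Perm (Fin d1),
            ∀ i, h2hat.eigenvalues i = htr2.eigenvalues (σ₂ i)) ∧
        -- (iii) the partial traces of `Ĉ` are diagonal
        (ptrace1 ((U2 ⊗ₖ U1) * C * (U2 ⊗ₖ U1)ᴴ)).IsDiag ∧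
        (ptrace2 ((U2 ⊗ₖ U1) * C * (U2 ⊗ₖ U1)ᴴ)).IsDiag ∧
        -- (iv) the eigenvalues of the partial traces of `C` are the corresponding sums of
        -- diagonal entries of `Ĉ`
        (∃ τ₁ : Equiv.Perm (Fin d2), ∀ i : Fin d2,
            (htr1.eigenvalues (τ₁ i) : ℂ) =
              ∑ s : Fin d1, ((U2 ⊗ₖ U1) * C * (U2 ⊗ₖ U1)ᴴ) (s, i) (s, i)) ∧
        (∃ τ₂ : Equiv.Perm (Fin d1), ∀ j : Fin d1,
            (htr2.eigenvalues (τ₂ j) : ℂ) =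
              ∑ s : Fin d2, ((U2 ⊗ₖ U1) * C * (U2 ⊗ₖ U1)ᴴ) (j, s) (j, s)) := by
  set V2 : Matrix (Fin d1) (Fin d1) ℂ := (htr2.eigenvectorUnitary : Matrix (Fin d1) (Fin d1) ℂ)
  set V1 : Matrix (Fin d2) (Fin d2) ℂ := (htr1.eigenvectorUnitary : Matrix (Fin d2) (Fin d2) ℂ)
  refine ⟨V2ᴴ, V1ᴴ, ?_, ?_, ?_⟩
  · rw [← Matrix.star_eq_conjTranspose]
    exact Unitary.star_mem htr2.eigenvectorUnitary.2
  · rw [← Matrix.star_eq_conjTranspose]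
    exact Unitary.star_mem htr1.eigenvectorUnitary.2
  intro hChat h1hat h2hat
  have hU2mem : V2ᴴ ∈ Matrix.unitaryGroup (Fin d1) ℂ := by
    rw [← Matrix.star_eq_conjTranspose]
    exact Unitary.star_mem htr2.eigenvectorUnitary.2
  have hU1mem : V1ᴴ ∈ Matrix.unitaryGroup (Fin d2) ℂ := by
    rw [← Matrix.star_eq_conjTranspose]
    exact Unitary.star_mem htr1.eigenvectorUnitary.2
  have hVmem : V2ᴴ ⊗ₖ V1ᴴ ∈ Matrix.unitaryGroup (Fin d1 × Fin d2) ℂ :=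
    kron_unitary hU2mem hU1mem
  -- the partial traces of Ĉ are diagonal
  have hdiag1 : ptrace1 ((V2ᴴ ⊗ₖ V1ᴴ) * C * (V2ᴴ ⊗ₖ V1ᴴ)ᴴ)
      = diagonal (RCLike.ofReal ∘ htr1.eigenvalues) := by
    rw [ptrace1_conj _ _ hU2mem, Matrix.conjTranspose_conjTranspose,
      ← htr1.conjStarAlgAut_star_eigenvectorUnitary, Unitary.conjStarAlgAut_apply, Unitary.coe_star, star_star]
    rfl
  have hdiag2 : ptrace2 ((V2ᴴ ⊗ₖ V1ᴴ) * C * (V2ᴴ ⊗ₖ V1ᴴ)ᴴ)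
      = diagonal (RCLike.ofReal ∘ htr2.eigenvalues) := by
    rw [ptrace2_conj _ _ hU1mem, Matrix.conjTranspose_conjTranspose,
      ← htr2.conjStarAlgAut_star_eigenvectorUnitary, Unitary.conjStarAlgAut_apply, Unitary.coe_star, star_star]
    rfl
  refine ⟨?_, ?_, ?_, ?_, ?_, ?_, ?_⟩
  · -- (i)
    obtain ⟨σ, hσ⟩ := exists_perm_of_multiset_eq hChat.eigenvalues hC.eigenvalues
      (eigenvalues_multiset_conj hC hChat hVmem rfl)
    exact ⟨σ, fun k => congrFun hσ k⟩
  · -- (ii) first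
    obtain ⟨σ, hσ⟩ := exists_perm_of_multiset_eq h1hat.eigenvalues htr1.eigenvalues
      (eigenvalues_multiset_conj htr1 h1hat hU1mem (ptrace1_conj _ _ hU2mem C))
    exact ⟨σ, fun s => congrFun hσ s⟩
  · -- (ii) second
    obtain ⟨σ, hσ⟩ := exists_perm_of_multiset_eq h2hat.eigenvalues htr2.eigenvalues
      (eigenvalues_multiset_conj htr2 h2hat hU2mem (ptrace2_conj _ _ hU1mem C))
    exact ⟨σ, fun i => congrFun hσ i⟩
  · rw [hdiag1]; exact Matrix.isDiag_diagonal _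
  · rw [hdiag2]; exact Matrix.isDiag_diagonal _
  · -- (iv) first
    refine ⟨1, fun i => ?_⟩
    have h1 : (∑ s : Fin d1, ((V2ᴴ ⊗ₖ V1ᴴ) * C * (V2ᴴ ⊗ₖ V1ᴴ)ᴴ) (s, i) (s, i))
        = ptrace1 ((V2ᴴ ⊗ₖ V1ᴴ) * C * (V2ᴴ ⊗ₖ V1ᴴ)ᴴ) i i := rfl
    rw [h1, hdiag1]
    simp
  · -- (iv) second
    refine ⟨1, fun j => ?_⟩
    have h1 : (∑ s : Fin d2, ((V2ᴴ ⊗ₖ V1ᴴ) * C * (V2ᴴ ⊗ₖ V1ᴴ)ᴴ) (j, s) (j, s))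
        = ptrace2 ((V2ᴴ ⊗ₖ V1ᴴ) * C * (V2ᴴ ⊗ₖ V1ᴴ)ᴴ) j j := rfl
    rw [h1, hdiag2]
    simp
end

section
/- Let C be a Hermitian matrix on ℂ^{d1}⊗ℂ^{d2} with eigenvalues λ1 ≥ λ2 ≥ … ≥ λ_{d1d2}. Then λ(tr_2[C]) is majorized by the vector (Σ_{s=1}^{d2} λ_{(j−1)d2+s})_{j=1}^{d1} ∈ ℝ^{d1} (the sums of consecutive blocks of d2 eigenvalues, i.e. λ(tr_2[Λ]) for Λ the diagonal matrix of eigenvalues in decreasing order), and λ(tr_1[C]) is majorized by the vector (Σ_{s=1}^{d1} λ_{(i−1)d1+s})_{i=1}^{d2} ∈ ℝ^{d2} (the sums of consecutive blocks of d1 eigenvalues). -/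
open Matrix Finset Kronecker
open scoped ComplexOrder

lemma maxSum_set_eq {ι : Type*} [Fintype ι] [DecidableEq ι] (x : ι → ℝ) (k : ℕ) :
    {s : ℝ | ∃ A : Finset ι, A.card = k ∧ s = ∑ i ∈ A, x i}
      = ↑((Finset.univ.powersetCard k).image fun A => ∑ i ∈ A, x i) := by
  ext s
  simp [Finset.mem_powersetCard, eq_comm]

lemma bddAbove_maxSum_set {ι : Type*} [Fintype ι] (x : ι → ℝ) (k : ℕ) :
    BddAbove {s : ℝ | ∃ A : Finset ι, A.card = k ∧ s = ∑ i ∈ A, x i} := by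
  classical
  rw [maxSum_set_eq]
  exact (Finset.finite_toSet _).bddAbove

lemma le_maxSum {ι : Type*} [Fintype ι] (x : ι → ℝ) {k : ℕ} {A : Finset ι}
    (h : A.card = k) : ∑ i ∈ A, x i ≤ maxSum x k :=
  le_csSup (bddAbove_maxSum_set x k) ⟨A, h, rfl⟩

lemma maxSum_le {ι : Type*} [Fintype ι] (x : ι → ℝ) {k : ℕ} {b : ℝ}
    (hne : ∃ A : Finset ι, A.card = k)
    (h : ∀ A : Finset ι, A.card = k → ∑ i ∈ A, x i ≤ b) : maxSum x k ≤ b := by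
  obtain ⟨A, hA⟩ := hne
  exact csSup_le ⟨_, A, hA, rfl⟩ (by rintro s ⟨B, hB, rfl⟩; exact h B hB)

lemma maxSum_of_card_lt {ι : Type*} [Fintype ι] (x : ι → ℝ) {k : ℕ}
    (h : Fintype.card ι < k) : maxSum x k = 0 := by
  have : {s : ℝ | ∃ A : Finset ι, A.card = k ∧ s = ∑ i ∈ A, x i} = ∅ := by
    ext s
    simp only [Set.mem_setOf_eq, Set.mem_empty_iff_false, iff_false, not_exists]
    rintro A ⟨hA, -⟩
    have := A.card_le_univ
    omega
  rw [maxSum, this, Real.sSup_empty]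

lemma card_filter_lt_fin (n m : ℕ) (hm : m ≤ n) :
    (Finset.univ.filter (fun i : Fin n => (i : ℕ) < m)).card = m := by
  rw [show (Finset.univ.filter (fun i : Fin n => (i : ℕ) < m))
      = (Finset.range m).attachFin (fun x hx => lt_of_lt_of_le (Finset.mem_range.mp hx) hm) by
    ext i; simp [Finset.mem_attachFin]]
  rw [Finset.card_attachFin, Finset.card_range]

lemma sum_mul_le_top (n m : ℕ) (hm : m ≤ n) (μ q : Fin n → ℝ) (hμ : Antitone μ)
    (hq0 : ∀ i, 0 ≤ q i) (hq1 : ∀ i, q i ≤ 1) (hsum : ∑ i, q i = m) :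
    ∑ i, q i * μ i ≤ ∑ i ∈ Finset.univ.filter (fun i : Fin n => (i : ℕ) < m), μ i := by
  rcases eq_or_lt_of_le hm with h | h
  · subst h
    have hall : ∀ i ∈ (Finset.univ : Finset (Fin m)), (1 : ℝ) - q i = 0 := by
      rw [← Finset.sum_eq_zero_iff_of_nonneg (fun i _ => by linarith [hq1 i])]
      rw [Finset.sum_sub_distrib, hsum]
      simp
    have hfilter : (Finset.univ.filter (fun i : Fin m => (i : ℕ) < m)) = Finset.univ :=
      Finset.filter_true_of_mem (fun i _ => i.isLt)
    rw [hfilter]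
    apply le_of_eq
    apply Finset.sum_congr rfl
    intro i _
    have h1 : q i = 1 := by linarith [hall i (Finset.mem_univ i)]
    rw [h1, one_mul]
  · set F := Finset.univ.filter (fun i : Fin n => (i : ℕ) < m) with hF
    have hcard : (F.card : ℝ) = m := by rw [card_filter_lt_fin n m hm]
    set c := μ ⟨m, h⟩ with hc
    have step1 : ∑ i, q i * μ i = ∑ i ∈ F, q i * μ i + ∑ i ∈ Fᶜ, q i * μ i :=
      (Finset.sum_add_sum_compl F _).symm
    have bnd1 : ∑ i ∈ F, q i * μ i ≤ ∑ i ∈ F, ((q i - 1) * c + μ i) := by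
      apply Finset.sum_le_sum
      intro i hi
      have hilt : (i : ℕ) < m := (Finset.mem_filter.mp hi).2
      have hci : c ≤ μ i := hμ (by rw [Fin.le_def]; exact le_of_lt hilt)
      nlinarith [hq1 i]
    have bnd2 : ∑ i ∈ Fᶜ, q i * μ i ≤ ∑ i ∈ Fᶜ, q i * c := by
      apply Finset.sum_le_sum
      intro i hi
      have : ¬ ((i : ℕ) < m) := by
        simp only [hF, Finset.mem_compl, Finset.mem_filter, Finset.mem_univ, true_and] at hi
        exact hi
      have hci : μ i ≤ c := hμ (by simp only [Fin.le_def, Fin.val_mk]; omega)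
      nlinarith [hq0 i]
    have expand : ∑ i ∈ F, ((q i - 1) * c + μ i) + ∑ i ∈ Fᶜ, q i * c
        = ∑ i ∈ F, μ i + ((∑ i, q i) - m) * c := by
      rw [Finset.sum_add_distrib, ← Finset.sum_mul, ← Finset.sum_mul,
        Finset.sum_sub_distrib, Finset.sum_const, nsmul_eq_mul, mul_one, hcard]
      have : ∑ i ∈ F, q i + ∑ i ∈ Fᶜ, q i = ∑ i, q i := Finset.sum_add_sum_compl F q
      linear_combination c * this
    rw [hsum, sub_self, zero_mul, add_zero] at expand
    calc ∑ i, q i * μ i = ∑ i ∈ F, q i * μ i + ∑ i ∈ Fᶜ, q i * μ i := step1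
      _ ≤ ∑ i ∈ F, ((q i - 1) * c + μ i) + ∑ i ∈ Fᶜ, q i * c := add_le_add bnd1 bnd2
      _ = ∑ i ∈ F, μ i := expand

section basic
variable {n : Type*} [Fintype n] [DecidableEq n]

-- spectral theorem restated with ᴴ
lemma mySpec {A : Matrix n n ℂ} (hA : A.IsHermitian) :
    A = (hA.eigenvectorUnitary : Matrix n n ℂ) * diagonal (fun i => (hA.eigenvalues i : ℂ))
      * (hA.eigenvectorUnitary : Matrix n n ℂ)ᴴ := by
  have := hA.spectral_theorem
  rw [Unitary.conjStarAlgAut_apply] at this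
  rw [← Matrix.star_eq_conjTranspose]
  exact this

lemma unit1 {A : Matrix n n ℂ} (hA : A.IsHermitian) :
    (hA.eigenvectorUnitary : Matrix n n ℂ)ᴴ * (hA.eigenvectorUnitary : Matrix n n ℂ) = 1 := by
  rw [← Matrix.star_eq_conjTranspose]
  exact Unitary.coe_star_mul_self _

lemma unit2 {A : Matrix n n ℂ} (hA : A.IsHermitian) :
    (hA.eigenvectorUnitary : Matrix n n ℂ) * (hA.eigenvectorUnitary : Matrix n n ℂ)ᴴ = 1 := by
  rw [← Matrix.star_eq_conjTranspose]
  exact Unitary.coe_mul_star_self _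

-- trace of V * diagonal d * Vᴴ
lemma trace_conj_diag (V : Matrix n n ℂ) (hV : Vᴴ * V = 1) (d : n → ℂ) :
    (V * diagonal d * Vᴴ).trace = ∑ i, d i := by
  rw [Matrix.trace_mul_comm, ← Matrix.mul_assoc, hV, Matrix.one_mul, Matrix.trace_diagonal]

end basic


lemma trace_kron_ptrace2 {d1 d2 : ℕ} (P : Matrix (Fin d1) (Fin d1) ℂ)
    (C : Matrix (Fin d1 × Fin d2) (Fin d1 × Fin d2) ℂ) :
    ((P ⊗ₖ (1 : Matrix (Fin d2) (Fin d2) ℂ)) * C).trace = (P * ptrace2 C).trace := by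
  simp only [Matrix.trace, Matrix.diag, Matrix.mul_apply, ptrace2, Matrix.of_apply,
    Fintype.sum_prod_type, kroneckerMap_apply, Matrix.one_apply, Finset.mul_sum, Finset.sum_mul]
  -- LHS: ∑ i ∑ s ∑ j ∑ t, (P i j * ite (s=t) 1 0) * C (j,t) (i,s)
  -- RHS: ∑ i ∑ j ∑ s, P i j * C (j,s) (i,s)
  refine Finset.sum_congr rfl fun i _ => ?_
  rw [Finset.sum_comm]
  refine Finset.sum_congr rfl fun j _ => ?_
  simp only [mul_ite, mul_one, mul_zero, ite_mul, zero_mul]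
  rw [Finset.sum_comm]
  refine Finset.sum_congr rfl fun s _ => ?_
  simp

-- diagonal entries of Vᴴ * Q * V for a hermitian idempotent Q are in [0,1] (as reals)
lemma diag_proj_conj {ι : Type*} [Fintype ι] [DecidableEq ι]
    (V Q : Matrix ι ι ℂ) (hV1 : Vᴴ * V = 1) (hQh : Qᴴ = Q) (hQi : Q * Q = Q) (p : ι) :
    ∃ r : ℝ, (Vᴴ * Q * V) p p = (r : ℂ) ∧ 0 ≤ r ∧ r ≤ 1 := by
  have key : ∀ (R : Matrix ι ι ℂ), Rᴴ = R → R * R = R →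
      ∃ r : ℝ, (Vᴴ * R * V) p p = (r : ℂ) ∧ 0 ≤ r := by
    intro R hRh hRi
    refine ⟨∑ y, Complex.normSq ((R * V) y p), ?_, ?_⟩
    · have : Vᴴ * R * V = (R * V)ᴴ * (R * V) := by
        rw [Matrix.conjTranspose_mul, hRh, ← Matrix.mul_assoc, Matrix.mul_assoc (Vᴴ * R) R V,
          ← Matrix.mul_assoc (Vᴴ * R) R V, Matrix.mul_assoc Vᴴ R R, hRi]
      rw [this, Matrix.mul_apply]
      push_cast
      refine Finset.sum_congr rfl fun y _ => ?_
      rw [Matrix.conjTranspose_apply]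
      rw [show star ((R * V) y p) = (starRingEnd ℂ) ((R * V) y p) from rfl,
        ← Complex.normSq_eq_conj_mul_self]
    · exact Finset.sum_nonneg fun y _ => Complex.normSq_nonneg _
  obtain ⟨r, hr, hr0⟩ := key Q hQh hQi
  have hQ'h : (1 - Q)ᴴ = 1 - Q := by
    rw [Matrix.conjTranspose_sub, Matrix.conjTranspose_one, hQh]
  have hQ'i : (1 - Q) * (1 - Q) = 1 - Q := by
    rw [Matrix.sub_mul, Matrix.mul_sub, Matrix.mul_sub, hQi]
    simp [Matrix.one_mul, Matrix.mul_one]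
  obtain ⟨r', hr', hr'0⟩ := key (1 - Q) hQ'h hQ'i
  refine ⟨r, hr, hr0, ?_⟩
  have : (Vᴴ * (1 - Q) * V) p p = 1 - (Vᴴ * Q * V) p p := by
    rw [Matrix.mul_sub, Matrix.mul_one, Matrix.sub_mul, hV1]
    simp [Matrix.sub_apply, Matrix.one_apply]
  rw [hr', hr] at this
  have h1 : (r' : ℂ) = ((1 - r : ℝ) : ℂ) := by push_cast; rw [this]
  have := Complex.ofReal_inj.mp h1
  linarith

lemma finProdFinEquiv_val_lt_iff {d1 d2 k : ℕ} (j : Fin d1) (s : Fin d2) :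
    ((finProdFinEquiv (j, s) : Fin (d1 * d2)) : ℕ) < k * d2 ↔ (j : ℕ) < k := by
  have hval : ((finProdFinEquiv (j, s) : Fin (d1 * d2)) : ℕ) = (s : ℕ) + d2 * (j : ℕ) := rfl
  rw [hval]
  constructor
  · intro h
    by_contra hk
    push_neg at hk
    have : k * d2 ≤ d2 * (j : ℕ) := by
      rw [Nat.mul_comm k d2]; exact Nat.mul_le_mul_left d2 hk
    omega
  · intro h
    have h1 : (s : ℕ) + d2 * (j : ℕ) < d2 * ((j : ℕ) + 1) := by
      rw [Nat.mul_add, Nat.mul_one]; omega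
    have h2 : d2 * ((j : ℕ) + 1) ≤ d2 * k := Nat.mul_le_mul_left d2 h
    rw [Nat.mul_comm d2 k] at h2
    omega

lemma block_sum_eq {d1 d2 k : ℕ} (μ : Fin (d1 * d2) → ℝ) :
    ∑ m ∈ Finset.univ.filter (fun m : Fin (d1 * d2) => (m : ℕ) < k * d2), μ m
      = ∑ j ∈ Finset.univ.filter (fun j : Fin d1 => (j : ℕ) < k),
          ∑ s : Fin d2, μ (finProdFinEquiv (j, s)) := by
  rw [Finset.sum_filter, Finset.sum_filter]
  rw [← Equiv.sum_comp (finProdFinEquiv : Fin d1 × Fin d2 ≃ Fin (d1 * d2))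
    (fun m => if (m : ℕ) < k * d2 then μ m else 0)]
  rw [Fintype.sum_prod_type]
  refine Finset.sum_congr rfl fun j _ => ?_
  by_cases hj : (j : ℕ) < k
  · rw [if_pos hj]
    refine Finset.sum_congr rfl fun s _ => ?_
    rw [if_pos ((finProdFinEquiv_val_lt_iff j s).mpr hj)]
  · rw [if_neg hj]
    refine Finset.sum_eq_zero fun s _ => ?_
    rw [if_neg (fun h => hj ((finProdFinEquiv_val_lt_iff j s).mp h))]

theorem main_ptrace2 (d1 d2 : ℕ) (C V : Matrix (Fin d1 × Fin d2) (Fin d1 × Fin d2) ℂ)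
    (hV1 : Vᴴ * V = 1) (hV2 : V * Vᴴ = 1)
    (ν : Fin d1 × Fin d2 → ℝ)
    (hspec : C = V * Matrix.diagonal (fun p => (ν p : ℂ)) * Vᴴ)
    (μ : Fin (d1 * d2) → ℝ) (hμ : Antitone μ)
    (g : Fin (d1 * d2) ≃ Fin d1 × Fin d2) (hg : ∀ k, μ k = ν (g k))
    (htr2 : (ptrace2 C).IsHermitian) :
    Majorizes htr2.eigenvalues
      (fun j : Fin d1 => ∑ s : Fin d2, μ (finProdFinEquiv (j, s))) := by
  classical
  set B := ptrace2 C with hB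
  set x : Fin d1 → ℝ := htr2.eigenvalues with hx
  set y : Fin d1 → ℝ := fun j => ∑ s : Fin d2, μ (finProdFinEquiv (j, s)) with hy
  set U : Matrix (Fin d1) (Fin d1) ℂ := (htr2.eigenvectorUnitary : Matrix (Fin d1) (Fin d1) ℂ)
    with hU
  have hU1 : Uᴴ * U = 1 := unit1 htr2
  have hU2 : U * Uᴴ = 1 := unit2 htr2
  have hBspec : B = U * diagonal (fun a => (x a : ℂ)) * Uᴴ := mySpec htr2
  -- traces
  have htraceC : C.trace = ((∑ p, ν p : ℝ) : ℂ) := by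
    rw [hspec, trace_conj_diag V hV1]; push_cast; rfl
  have htraceB : B.trace = ((∑ a, x a : ℝ) : ℂ) := by
    rw [hBspec, trace_conj_diag U hU1]; push_cast; rfl
  have htraceBC : B.trace = C.trace := by
    simp only [hB, ptrace2, Matrix.trace, Matrix.diag, Matrix.of_apply, Fintype.sum_prod_type]
  have hsum_eq : ∑ a, x a = ∑ j, y j := by
    have h1 : ∑ j, y j = ∑ p, ν p := by
      simp only [hy]
      rw [← Fintype.sum_prod_type (f := fun p : Fin d1 × Fin d2 => μ (finProdFinEquiv p))]
      rw [Equiv.sum_comp (finProdFinEquiv : Fin d1 × Fin d2 ≃ Fin (d1 * d2)) μ]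
      rw [← Equiv.sum_comp g ν]
      exact Finset.sum_congr rfl fun m _ => (hg m)
    rw [h1]
    have := htraceB.symm.trans (htraceBC.trans htraceC)
    exact_mod_cast this
  refine ⟨fun k => ?_, hsum_eq⟩
  by_cases hk : d1 < k
  · rw [maxSum_of_card_lt x (by simpa using hk), maxSum_of_card_lt y (by simpa using hk)]
  push_neg at hk
  -- RHS lower bound
  have hkd : k * d2 ≤ d1 * d2 := Nat.mul_le_mul_right d2 hk
  have hRHS : ∑ j ∈ Finset.univ.filter (fun j : Fin d1 => (j : ℕ) < k), y j ≤ maxSum y k :=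
    le_maxSum y (card_filter_lt_fin d1 k hk)
  refine le_trans (maxSum_le x ?_ fun A hA => ?_) hRHS
  · obtain ⟨A, -, hA⟩ := Finset.exists_subset_card_eq
      (s := (Finset.univ : Finset (Fin d1))) (n := k) (by simpa using hk)
    exact ⟨A, hA⟩
  -- core inequality
  set Δ : Matrix (Fin d1) (Fin d1) ℂ := diagonal (fun a => if a ∈ A then (1:ℂ) else 0) with hΔ
  set P : Matrix (Fin d1) (Fin d1) ℂ := U * Δ * Uᴴ with hP
  set Q : Matrix (Fin d1 × Fin d2) (Fin d1 × Fin d2) ℂ := P ⊗ₖ (1 : Matrix (Fin d2) (Fin d2) ℂ)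
    with hQ
  have hstar : (star fun a : Fin d1 => if a ∈ A then (1:ℂ) else 0)
      = fun a : Fin d1 => if a ∈ A then (1:ℂ) else 0 := by
    funext a; by_cases h : a ∈ A <;> simp [h, Pi.star_apply]
  have hΔh : Δᴴ = Δ := by
    rw [hΔ, Matrix.diagonal_conjTranspose, hstar]
  have hΔi : Δ * Δ = Δ := by
    rw [hΔ, Matrix.diagonal_mul_diagonal]
    exact congrArg Matrix.diagonal (funext fun a => by by_cases h : a ∈ A <;> simp [h])
  have hPh : Pᴴ = P := by
    rw [hP, Matrix.conjTranspose_mul, Matrix.conjTranspose_mul, Matrix.conjTranspose_conjTranspose,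
      hΔh, Matrix.mul_assoc]
  have hPi : P * P = P := by
    rw [hP]
    calc U * Δ * Uᴴ * (U * Δ * Uᴴ) = U * Δ * (Uᴴ * U) * Δ * Uᴴ := by
          simp only [Matrix.mul_assoc]
      _ = U * Δ * Uᴴ := by rw [hU1, Matrix.mul_one, Matrix.mul_assoc U Δ Δ, hΔi]
  have hPsym : ∀ a b, star (P b a) = P a b := fun a b =>
    (Matrix.conjTranspose_apply P b a).symm.trans (congrFun (congrFun hPh a) b)
  have hQh : Qᴴ = Q := by
    ext p q
    rw [Matrix.conjTranspose_apply, hQ]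
    simp only [kroneckerMap_apply, star_mul', Matrix.one_apply, apply_ite, star_one, star_zero]
    rw [hPsym p.1 q.1]
    by_cases h : p.2 = q.2
    · simp [h]
    · simp [h, Ne.symm h]
  have hQi : Q * Q = Q := by
    rw [hQ, ← Matrix.mul_kronecker_mul, hPi, Matrix.one_mul]
  -- trace identities
  have t1 : (P * B).trace = ((∑ a ∈ A, x a : ℝ) : ℂ) := by
    have : P * B = U * (Δ * diagonal (fun a => (x a : ℂ))) * Uᴴ := by
      rw [hP, hBspec]
      calc U * Δ * Uᴴ * (U * diagonal (fun a => (x a : ℂ)) * Uᴴ)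
          = U * Δ * (Uᴴ * U) * diagonal (fun a => (x a : ℂ)) * Uᴴ := by
            simp only [Matrix.mul_assoc]
        _ = U * (Δ * diagonal (fun a => (x a : ℂ))) * Uᴴ := by
            rw [hU1, Matrix.mul_one, Matrix.mul_assoc U Δ _]
    rw [this, hΔ, Matrix.diagonal_mul_diagonal, trace_conj_diag U hU1]
    rw [Complex.ofReal_sum]
    simp only [ite_mul, one_mul, zero_mul]
    rw [Finset.sum_ite_mem, Finset.univ_inter]
  have t2 : (Q * C).trace = (P * B).trace := by rw [hQ, hB]; exact trace_kron_ptrace2 P C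
  -- diagonal entries of Vᴴ Q V
  choose r hr hr0 hr1 using fun p => diag_proj_conj V Q hV1 hQh hQi p
  have htraceP : P.trace = (k : ℂ) := by
    rw [hP, hΔ, trace_conj_diag U hU1]
    rw [Finset.sum_ite_mem, Finset.univ_inter, Finset.sum_const, hA]
    simp
  have htraceQ : Q.trace = ((k * d2 : ℕ) : ℂ) := by
    rw [hQ, Matrix.trace_kronecker, Matrix.trace_one, htraceP]
    simp [Fintype.card_fin]
  have hrsum : ∑ p, r p = ((k * d2 : ℕ) : ℝ) := by
    have h1 : ((∑ p, r p : ℝ) : ℂ) = (Vᴴ * Q * V).trace := by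
      rw [Matrix.trace]
      push_cast
      exact Finset.sum_congr rfl fun p _ => (hr p).symm
    have h2 : (Vᴴ * Q * V).trace = Q.trace := by
      rw [Matrix.trace_mul_comm, ← Matrix.mul_assoc, hV2, Matrix.one_mul]
    have := h1.trans (h2.trans htraceQ)
    exact_mod_cast this
  have t3 : (Q * C).trace = ((∑ p, r p * ν p : ℝ) : ℂ) := by
    rw [hspec]
    rw [show Q * (V * diagonal (fun p => ((ν p : ℝ) : ℂ)) * Vᴴ)
        = (Q * V * diagonal (fun p => ((ν p : ℝ) : ℂ))) * Vᴴ by simp [Matrix.mul_assoc]]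
    rw [Matrix.trace_mul_comm]
    rw [show Vᴴ * (Q * V * diagonal (fun p => ((ν p : ℝ) : ℂ)))
        = (Vᴴ * Q * V) * diagonal (fun p => ((ν p : ℝ) : ℂ)) by simp [Matrix.mul_assoc]]
    rw [Matrix.trace]
    push_cast
    refine Finset.sum_congr rfl fun p _ => ?_
    rw [Matrix.diag_apply, Matrix.mul_diagonal, hr p]
  -- the real equality
  have heq : ∑ a ∈ A, x a = ∑ p, r p * ν p := by
    have : ((∑ a ∈ A, x a : ℝ) : ℂ) = ((∑ p, r p * ν p : ℝ) : ℂ) :=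
      t1.symm.trans (t2.symm.trans t3)
    exact_mod_cast this
  rw [heq]
  have hreindex : ∑ p, r p * ν p = ∑ m, r (g m) * μ m := by
    rw [← Equiv.sum_comp g (fun p => r p * ν p)]
    exact Finset.sum_congr rfl fun m _ => by rw [hg m]
  rw [hreindex]
  have hmain := sum_mul_le_top (d1 * d2) (k * d2) hkd μ (fun m => r (g m)) hμ
    (fun m => hr0 (g m)) (fun m => hr1 (g m))
    (by rw [Equiv.sum_comp g r]; exact_mod_cast hrsum)
  exact hmain.trans (le_of_eq (block_sum_eq μ))


lemma eig_congr {n : Type*} [Fintype n] [DecidableEq n] {M N : Matrix n n ℂ}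
    (h : M = N) (hM : M.IsHermitian) (hN : N.IsHermitian) :
    hM.eigenvalues = hN.eigenvalues := by subst h; rfl

theorem single_ptrace_majorization (d1 d2 : ℕ)
    (C : Matrix (Fin d1 × Fin d2) (Fin d1 × Fin d2) ℂ) (hC : C.IsHermitian)
    (htr1 : (ptrace1 C).IsHermitian) (htr2 : (ptrace2 C).IsHermitian)
    -- `μ` lists the eigenvalues of `C` in decreasing order
    (μ : Fin (d1 * d2) → ℝ) (hμ : Antitone μ)
    (g : Fin (d1 * d2) ≃ Fin d1 × Fin d2) (hg : ∀ k, μ k = hC.eigenvalues (g k)) :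
    Majorizes htr2.eigenvalues
      (fun j : Fin d1 => ∑ s : Fin d2, μ (finProdFinEquiv (j, s))) ∧
    Majorizes htr1.eigenvalues
      (fun i : Fin d2 => ∑ s : Fin d1, μ (finCongr (Nat.mul_comm d2 d1) (finProdFinEquiv (i, s)))) := by
  constructor
  · exact main_ptrace2 d1 d2 C _ (unit1 hC) (unit2 hC) hC.eigenvalues (mySpec hC) μ hμ g hg htr2
  · set e : Fin d2 × Fin d1 ≃ Fin d1 × Fin d2 := Equiv.prodComm _ _ with he
    set V : Matrix (Fin d1 × Fin d2) (Fin d1 × Fin d2) ℂ :=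
      (hC.eigenvectorUnitary : Matrix (Fin d1 × Fin d2) (Fin d1 × Fin d2) ℂ) with hV
    set C' : Matrix (Fin d2 × Fin d1) (Fin d2 × Fin d1) ℂ := C.submatrix e e with hC'
    set V' : Matrix (Fin d2 × Fin d1) (Fin d2 × Fin d1) ℂ := V.submatrix e e with hV'
    have hct : Vᴴ.submatrix e e = V'ᴴ := by
      rw [hV', Matrix.conjTranspose_submatrix]
    have hV'1 : V'ᴴ * V' = 1 := by
      rw [← hct, hV', Matrix.submatrix_mul_equiv, unit1 hC, Matrix.submatrix_one_equiv]
    have hV'2 : V' * V'ᴴ = 1 := by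
      rw [← hct, hV', Matrix.submatrix_mul_equiv, unit2 hC, Matrix.submatrix_one_equiv]
    have hspec' : C' = V' * Matrix.diagonal (fun p => ((hC.eigenvalues (e p) : ℝ) : ℂ)) * V'ᴴ := by
      have h0 : C.submatrix ⇑e ⇑e
          = (V * Matrix.diagonal (fun p => ((hC.eigenvalues p : ℝ) : ℂ)) * Vᴴ).submatrix ⇑e ⇑e :=
        congrArg (fun M : Matrix (Fin d1 × Fin d2) (Fin d1 × Fin d2) ℂ => M.submatrix ⇑e ⇑e)
          (mySpec hC)
      rw [hC', h0]
      rw [← Matrix.submatrix_mul_equiv (V * Matrix.diagonal fun p => ((hC.eigenvalues p : ℝ) : ℂ))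
        Vᴴ e e e]
      rw [← Matrix.submatrix_mul_equiv V (Matrix.diagonal fun p => ((hC.eigenvalues p : ℝ) : ℂ))
        e e e]
      rw [Matrix.submatrix_diagonal_equiv, hct]
      rfl
    have hμ' : Antitone (fun kk : Fin (d2 * d1) => μ (finCongr (Nat.mul_comm d2 d1) kk)) := by
      intro a b hab
      apply hμ
      rw [Fin.le_def]
      simp only [finCongr_apply, Fin.coe_cast]
      exact hab
    set g' : Fin (d2 * d1) ≃ Fin d2 × Fin d1 :=
      (finCongr (Nat.mul_comm d2 d1)).trans (g.trans e.symm) with hg'def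
    have hg' : ∀ kk : Fin (d2 * d1),
        μ (finCongr (Nat.mul_comm d2 d1) kk) = hC.eigenvalues (e (g' kk)) := by
      intro kk
      rw [hg'def]
      simp only [Equiv.trans_apply, Equiv.apply_symm_apply]
      exact hg _
    have hEq : ptrace2 C' = ptrace1 C := by
      ext i j
      simp [ptrace1, ptrace2, hC', Matrix.submatrix_apply, he]
    have htr2' : (ptrace2 C').IsHermitian := hEq ▸ htr1
    have R := main_ptrace2 d2 d1 C' V' hV'1 hV'2 (fun p => hC.eigenvalues (e p)) hspec'
      (fun kk => μ (finCongr (Nat.mul_comm d2 d1) kk)) hμ' g' hg' htr2'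
    rwa [eig_congr hEq htr2' htr1] at R
end

section
/- Let C be a Hermitian matrix on ℂ^{d1}⊗ℂ^{d2} with eigenvalues λ1 ≥ … ≥ λ_{d1d2}. For every unitarily invariant norm ‖·‖ on d1×d1 complex matrices (a matrix norm satisfying ‖UAV‖ = ‖A‖ for all unitaries U, V), one has ‖tr_2[C]‖ ≤ ‖D2‖, where D2 is the d1×d1 diagonal matrix with diagonal entries (Σ_{s=1}^{d2} λ_{(j−1)d2+s})_{j=1}^{d1}; and for every unitarily invariant norm on d2×d2 complex matrices, ‖tr_1[C]‖ ≤ ‖D1‖, where D1 is the d2×d2 diagonal matrix with diagonal entries (Σ_{s=1}^{d1} λ_{(i−1)d1+s})_{i=1}^{d2}. -/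
open Matrix Finset Kronecker
open scoped ComplexOrder

variable {d : ℕ}

noncomputable def ext0 (w : Fin d → ℝ) : ℕ → ℝ := fun i => if h : i < d then w ⟨i, h⟩ else 0

noncomputable def psum (w : Fin d → ℝ) (k : ℕ) : ℝ :=
  ∑ j ∈ Finset.univ.filter (fun j : Fin d => (j : ℕ) < k), w j

lemma sum_range_ext0 (w : Fin d → ℝ) (m : ℕ) :
    ∑ i ∈ Finset.range m, ext0 w i = psum w m := by
  induction m with
  | zero => simp [psum]
  | succ m ih =>
    rw [Finset.sum_range_succ, ih, psum, psum]
    by_cases h : m < d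
    · have : Finset.univ.filter (fun j : Fin d => (j : ℕ) < m + 1) =
          insert ⟨m, h⟩ (Finset.univ.filter (fun j : Fin d => (j : ℕ) < m)) := by
        ext j
        simp only [Finset.mem_insert, Finset.mem_filter, Finset.mem_univ, true_and]
        constructor
        · intro hj
          rcases Nat.lt_succ_iff_lt_or_eq.mp hj with h' | h'
          · exact Or.inr h'
          · exact Or.inl (Fin.ext h')
        · rintro (rfl | hj)
          · exact Nat.lt_succ_self m
          · exact Nat.lt_succ_of_lt hj
      rw [this, Finset.sum_insert (by simp)]
      simp [ext0, h]
      ring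
    · have : ∀ j : Fin d, ((j : ℕ) < m + 1) = ((j : ℕ) < m) := by
        intro j
        have hj := j.2
        have : (j : ℕ) < m := lt_of_lt_of_le hj (Nat.le_of_not_lt h)
        simp [this, Nat.lt_succ_of_lt this]
      simp only [this]
      simp [ext0, h]

lemma abel_identity (a u : ℕ → ℝ) (d : ℕ) :
    ∑ i ∈ Finset.range d, a i * u i =
      (∑ k ∈ Finset.range d, (a k - a (k + 1)) * (∑ i ∈ Finset.range (k + 1), u i))
        + a d * (∑ i ∈ Finset.range d, u i) := by
  induction d with
  | zero => simp
  | succ d ih =>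
    rw [Finset.sum_range_succ, ih, Finset.sum_range_succ (fun k => (a k - a (k+1)) * _)]
    rw [Finset.sum_range_succ u]
    ring

lemma abel_le (a u : ℕ → ℝ) (d : ℕ) (ha : ∀ k, k + 1 < d → a (k + 1) ≤ a k)
    (hps : ∀ m, m ≤ d → (∑ i ∈ Finset.range m, u i) ≤ 0)
    (htot : (∑ i ∈ Finset.range d, u i) = 0) :
    ∑ i ∈ Finset.range d, a i * u i ≤ 0 := by
  rw [abel_identity a u d, htot, mul_zero, add_zero]
  apply Finset.sum_nonpos
  intro k hk
  rw [Finset.mem_range] at hk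
  by_cases h : k + 1 < d
  · exact mul_nonpos_of_nonneg_of_nonpos (by linarith [ha k h]) (hps (k+1) (le_of_lt h))
  · have : k + 1 = d := by omega
    rw [this, htot, mul_zero]

lemma dot_le_topsum {n : ℕ} (μ : Fin n → ℝ) (hμ : Antitone μ) (t : Fin n → ℝ)
    (h0 : ∀ k, 0 ≤ t k) (h1 : ∀ k, t k ≤ 1) (K : ℕ) (hK : K ≤ n)
    (hts : ∑ k, t k = K) :
    ∑ k, μ k * t k ≤ psum μ K := by
  rcases Nat.eq_zero_or_pos K with rfl | hKpos
  · have : ∀ k, t k = 0 := by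
      intro k
      have := (Finset.sum_eq_zero_iff_of_nonneg (fun i _ => h0 i)).mp (by simpa using hts)
      exact this k (Finset.mem_univ k)
    simp [psum, this]
  · have hK1 : K - 1 < n := by omega
    set c : ℝ := μ ⟨K - 1, hK1⟩ with hc
    have card_filter : (Finset.univ.filter (fun k : Fin n => (k : ℕ) < K)).card = K := by
      have h1' : Finset.univ.filter (fun k : Fin n => (k : ℕ) < K) =
          (Finset.range K).attachFin (fun m hm => lt_of_lt_of_le (Finset.mem_range.mp hm) hK) := by
        ext j
        simp [Finset.mem_attachFin]
      rw [h1', Finset.card_attachFin, Finset.card_range]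
    have key : ∀ k : Fin n, μ k * t k ≤ c * t k + (if (k : ℕ) < K then μ k - c else 0) := by
      intro k
      by_cases h : (k : ℕ) < K
      · have hck : c ≤ μ k := by
          apply hμ
          simp only [Fin.mk_le_mk, Fin.le_def]
          omega
        have := mul_nonneg (sub_nonneg.mpr hck) (sub_nonneg.mpr (h1 k))
        simp only [h, if_pos]
        nlinarith
      · have hck : μ k ≤ c := by
          apply hμ
          simp only [Fin.le_def]
          omega
        simp only [h, if_neg, if_false]
        simpa using mul_le_mul_of_nonneg_right hck (h0 k)
    calc ∑ k, μ k * t k ≤ ∑ k, (c * t k + (if (k : ℕ) < K then μ k - c else 0)) :=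
          Finset.sum_le_sum (fun k _ => key k)
      _ = c * K + (psum μ K - K * c) := by
          rw [Finset.sum_add_distrib, ← Finset.mul_sum, hts]
          congr 1
          rw [← Finset.sum_filter]
          rw [Finset.sum_sub_distrib]
          simp only [psum, Finset.sum_const, card_filter, nsmul_eq_mul]
          try ring
      _ = psum μ K := by ring


lemma card_filter_lt {m : ℕ} (hm : m ≤ d) :
    (Finset.univ.filter (fun j : Fin d => (j : ℕ) < m)).card = m := by
  have h1' : Finset.univ.filter (fun j : Fin d => (j : ℕ) < m) =
      (Finset.range m).attachFin (fun x hx => lt_of_lt_of_le (Finset.mem_range.mp hx) hm) := by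
    ext j
    simp [Finset.mem_attachFin]
  rw [h1', Finset.card_attachFin, Finset.card_range]

lemma psum_univ (w : Fin d → ℝ) : psum w d = ∑ j, w j := by
  unfold psum
  rw [Finset.filter_true_of_mem]
  intro j _
  exact j.2

lemma maj_dot_le (x w : Fin d → ℝ)
    (hmaj : ∀ S : Finset (Fin d), ∑ j ∈ S, x j ≤ psum w S.card)
    (hsum : ∑ j, x j = ∑ j, w j) (c : Fin d → ℝ) :
    ∃ σ : Equiv.Perm (Fin d), ∑ i, c i * x i ≤ ∑ i, c i * w (σ i) := by
  set τ : Equiv.Perm (Fin d) := Tuple.sort (fun i => -(c i)) with hτ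
  have ha : ∀ i j : Fin d, i ≤ j → c (τ j) ≤ c (τ i) := by
    intro i j hij
    have := Tuple.monotone_sort (fun i => -(c i)) hij
    simp only [Function.comp_apply] at this
    linarith
  refine ⟨τ⁻¹, ?_⟩
  -- step A
  have stepA : ∑ i, c i * x i = ∑ i, c (τ i) * x (τ i) :=
    (Equiv.sum_comp τ (fun i => c i * x i)).symm
  -- step C
  have stepC : ∑ i, c (τ i) * w i = ∑ i, c i * w (τ⁻¹ i) := by
    have := Equiv.sum_comp τ (fun j => c j * w (τ⁻¹ j))
    simpa using this
  -- step B
  have stepB : ∑ i, c (τ i) * x (τ i) ≤ ∑ i, c (τ i) * w i := by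
    have key : ∑ i : Fin d, c (τ i) * (x (τ i) - w i) ≤ 0 := by
      set a : ℕ → ℝ := ext0 (fun i => c (τ i)) with haa
      set u : ℕ → ℝ := ext0 (fun i => x (τ i) - w i) with huu
      have conv : ∑ i : Fin d, c (τ i) * (x (τ i) - w i) = ∑ i ∈ Finset.range d, a i * u i := by
        have : ∀ i ∈ Finset.range d, a i * u i = ext0 (fun i => c (τ i) * (x (τ i) - w i)) i := by
          intro i hi
          have h : i < d := Finset.mem_range.mp hi
          simp [haa, huu, ext0, h]
        rw [Finset.sum_congr rfl this, sum_range_ext0, psum_univ]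
      rw [conv]
      apply abel_le
      · intro k hk
        have hk1 : k < d := by omega
        simp only [haa, ext0, hk, hk1, dif_pos]
        exact ha ⟨k, hk1⟩ ⟨k + 1, hk⟩ (by simp [Fin.le_def])
      · intro m hm
        rw [sum_range_ext0]
        have : psum (fun i => x (τ i) - w i) m =
            (∑ i ∈ Finset.univ.filter (fun j : Fin d => (j : ℕ) < m), x (τ i)) - psum w m := by
          unfold psum
          rw [Finset.sum_sub_distrib]
        rw [this]
        have himg : ∑ i ∈ Finset.univ.filter (fun j : Fin d => (j : ℕ) < m), x (τ i) =
            ∑ j ∈ (Finset.univ.filter (fun j : Fin d => (j : ℕ) < m)).image τ, x j := by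
          rw [Finset.sum_image]
          intro a _ b _ hab
          exact τ.injective hab
        have hcard : ((Finset.univ.filter (fun j : Fin d => (j : ℕ) < m)).image τ).card = m := by
          rw [Finset.card_image_of_injective _ τ.injective, card_filter_lt hm]
        have := hmaj ((Finset.univ.filter (fun j : Fin d => (j : ℕ) < m)).image τ)
        rw [hcard] at this
        rw [himg]
        linarith
      · rw [sum_range_ext0]
        have : psum (fun i => x (τ i) - w i) d = (∑ i, x (τ i)) - ∑ j, w j := by
          rw [psum_univ, Finset.sum_sub_distrib]
        rw [this, Equiv.sum_comp τ x, hsum, sub_self]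
    have expand : ∑ i : Fin d, c (τ i) * (x (τ i) - w i) =
        (∑ i, c (τ i) * x (τ i)) - ∑ i, c (τ i) * w i := by
      rw [← Finset.sum_sub_distrib]
      congr 1; ext i; ring
    linarith [expand ▸ key]
  calc ∑ i, c i * x i = ∑ i, c (τ i) * x (τ i) := stepA
    _ ≤ ∑ i, c (τ i) * w i := stepB
    _ = ∑ i, c i * w (τ⁻¹ i) := stepC

lemma mem_permutohedron (x w : Fin d → ℝ)
    (hmaj : ∀ S : Finset (Fin d), ∑ j ∈ S, x j ≤ psum w S.card)
    (hsum : ∑ j, x j = ∑ j, w j) :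
    x ∈ convexHull ℝ (Set.range (fun σ : Equiv.Perm (Fin d) => w ∘ ⇑σ)) := by
  by_contra hx
  set p : Equiv.Perm (Fin d) → (Fin d → ℝ) := fun σ => w ∘ ⇑σ with hp
  have hconv : Convex ℝ (convexHull ℝ (Set.range p)) := convex_convexHull ℝ _
  have hclosed : IsClosed (convexHull ℝ (Set.range p)) :=
    ((Set.finite_range p).isCompact_convexHull ℝ).isClosed
  obtain ⟨f, u, hfs, hux⟩ := geometric_hahn_banach_closed_point hconv hclosed hx
  set c : Fin d → ℝ := fun i => f (Pi.single i 1) with hc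
  have hf : ∀ y : Fin d → ℝ, f y = ∑ i, c i * y i := by
    intro y
    have hy : y = ∑ i, y i • (Pi.single i 1 : Fin d → ℝ) := by
      ext j
      rw [Finset.sum_apply]
      simp [Pi.single_apply, mul_comm]
    conv_lhs => rw [hy]
    rw [map_sum]
    congr 1; ext i
    rw [ContinuousLinearMap.map_smul]
    simp [hc, mul_comm]
  obtain ⟨σ, hσ⟩ := maj_dot_le x w hmaj hsum c
  have h1 : f x ≤ f (p σ) := by
    rw [hf, hf]
    simpa [hp] using hσ
  have h2 : f (p σ) < u := hfs (p σ) (subset_convexHull ℝ _ (Set.mem_range_self σ))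
  linarith


noncomputable def permU (σ : Equiv.Perm (Fin d)) : Matrix (Fin d) (Fin d) ℂ :=
  Matrix.of fun i j => if σ j = i then 1 else 0

lemma star_permU (σ : Equiv.Perm (Fin d)) : star (permU σ) = permU σ⁻¹ := by
  ext i j
  simp only [permU, star_apply, Matrix.of_apply]
  rw [apply_ite (star : ℂ → ℂ), star_one, star_zero]
  refine if_congr ?_ rfl rfl
  constructor
  · intro h; rw [← h]; simp
  · intro h; rw [← h]; simp

lemma permU_mul (σ π : Equiv.Perm (Fin d)) : permU σ * permU π = permU (σ * π) := by
  ext i j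
  simp only [Matrix.mul_apply, permU, Matrix.of_apply]
  rw [Finset.sum_eq_single (π j)]
  · simp [Equiv.Perm.mul_apply]
    exact if_congr Iff.rfl rfl rfl
  · intro k _ hk
    have h' : ¬ π j = k := fun h => hk h.symm
    simp [h']
  · simp

lemma permU_one : permU (1 : Equiv.Perm (Fin d)) = 1 := by
  ext i j
  simp only [permU, Matrix.of_apply, Equiv.Perm.one_apply, Matrix.one_apply]
  by_cases h : i = j <;> simp [h, eq_comm]

lemma permU_mem (σ : Equiv.Perm (Fin d)) : permU σ ∈ Matrix.unitaryGroup (Fin d) ℂ := by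
  rw [Matrix.mem_unitaryGroup_iff]
  rw [star_permU, permU_mul, mul_inv_cancel, permU_one]

lemma permU_mul_diagonal (τ : Equiv.Perm (Fin d)) (v : Fin d → ℂ) :
    permU τ * Matrix.diagonal v = Matrix.of fun i j => if τ j = i then v j else 0 := by
  ext i j
  simp only [Matrix.mul_apply, permU, Matrix.of_apply, Matrix.diagonal_apply]
  rw [Finset.sum_eq_single j]
  · by_cases h : τ j = i <;> simp [h]
  · intro k _ hk
    simp [hk]
  · simp

lemma permU_conj_diagonal (σ : Equiv.Perm (Fin d)) (v : Fin d → ℂ) :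
    permU σ⁻¹ * Matrix.diagonal v * star (permU σ⁻¹) = Matrix.diagonal (v ∘ ⇑σ) := by
  rw [star_permU, inv_inv, permU_mul_diagonal]
  ext i j
  simp only [Matrix.mul_apply, permU, Matrix.of_apply, Matrix.diagonal_apply, Function.comp]
  rw [Finset.sum_eq_single (σ j)]
  · by_cases h : i = j
    · subst h; simp
    · have h2 : ¬ σ⁻¹ (σ j) = i := by simpa using fun hh => h hh.symm
      simp only [h2, if_false, zero_mul, h, ite_false, ite_eq_right_iff]

  · intro k _ hk
    have h' : ¬ σ j = k := fun hh => hk hh.symm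
    simp [h']
  · simp


lemma norm_sum_le' (N : Matrix (Fin d) (Fin d) ℂ → ℝ)
    (hadd : ∀ A B, N (A + B) ≤ N A + N B)
    (hsmul : ∀ (a : ℂ) A, N (a • A) = ‖a‖ * N A)
    {ι : Type*} (t : Finset ι) (f : ι → Matrix (Fin d) (Fin d) ℂ) :
    N (∑ i ∈ t, f i) ≤ ∑ i ∈ t, N (f i) := by
  have hzero : N 0 = 0 := by
    have := hsmul 0 0
    simpa using this
  induction t using Finset.cons_induction with
  | empty => simp [hzero]
  | cons a s ha ih =>
    rw [Finset.sum_cons, Finset.sum_cons]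
    calc N (f a + ∑ i ∈ s, f i) ≤ N (f a) + N (∑ i ∈ s, f i) := hadd _ _
      _ ≤ N (f a) + ∑ i ∈ s, N (f i) := by linarith

lemma norm_bound_of_major (A : Matrix (Fin d) (Fin d) ℂ) (hA : A.IsHermitian)
    (w : Fin d → ℝ)
    (hmaj : ∀ S : Finset (Fin d), ∑ j ∈ S, hA.eigenvalues j ≤ psum w S.card)
    (hsum : ∑ j, hA.eigenvalues j = ∑ j, w j)
    (N : Matrix (Fin d) (Fin d) ℂ → ℝ)
    (hadd : ∀ A B, N (A + B) ≤ N A + N B)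
    (hsmul : ∀ (a : ℂ) A, N (a • A) = ‖a‖ * N A)
    (hinv : ∀ (U V A : Matrix (Fin d) (Fin d) ℂ), U ∈ Matrix.unitaryGroup (Fin d) ℂ →
      V ∈ Matrix.unitaryGroup (Fin d) ℂ → N (U * A * V) = N A) :
    N A ≤ N (Matrix.diagonal fun j => ((w j : ℝ) : ℂ)) := by
  set x : Fin d → ℝ := hA.eigenvalues with hx
  set D : Matrix (Fin d) (Fin d) ℂ := Matrix.diagonal fun j => ((w j : ℝ) : ℂ) with hD
  have hmem := mem_permutohedron x w hmaj hsum
  rw [_root_.convexHull_eq] at hmem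
  obtain ⟨ι, t, θ, z, hθ0, hθ1, hzs, hcm⟩ := hmem
  rw [Finset.centerMass_eq_of_sum_1 _ _ hθ1] at hcm
  -- choose permutations
  have hzs' : ∀ i : ι, ∃ σ : Equiv.Perm (Fin d), i ∈ t → z i = w ∘ ⇑σ := by
    intro i
    by_cases hi : i ∈ t
    · obtain ⟨σ, hσ⟩ := hzs i hi
      exact ⟨σ, fun _ => hσ.symm⟩
    · exact ⟨1, fun h => absurd h hi⟩
  choose σ hσ using hzs'
  -- pointwise identity
  have hxw : ∀ j : Fin d, x j = ∑ i ∈ t, θ i * w (σ i j) := by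
    intro j
    conv_lhs => rw [← hcm]
    rw [Finset.sum_apply]
    apply Finset.sum_congr rfl
    intro i hi
    rw [hσ i hi]
    simp
  -- matrix decomposition
  have hDdecomp : Matrix.diagonal (fun j => ((x j : ℝ) : ℂ)) =
      ∑ i ∈ t, (θ i : ℂ) • (permU (σ i)⁻¹ * D * star (permU (σ i)⁻¹)) := by
    have : ∀ i ∈ t, (θ i : ℂ) • (permU (σ i)⁻¹ * D * star (permU (σ i)⁻¹)) =
        (θ i : ℂ) • Matrix.diagonal ((fun j => ((w j : ℝ) : ℂ)) ∘ ⇑(σ i)) := by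
      intro i _
      rw [hD, permU_conj_diagonal]
    rw [Finset.sum_congr rfl this]
    ext j k
    rw [Matrix.sum_apply]
    by_cases hjk : j = k
    · subst hjk
      simp only [Matrix.diagonal_apply_eq, Matrix.smul_apply, Function.comp_apply, smul_eq_mul]
      rw [hxw j]
      push_cast
      ring
    · simp [Matrix.diagonal_apply_ne _ hjk]
  -- spectral theorem
  set U : Matrix (Fin d) (Fin d) ℂ := (hA.eigenvectorUnitary : Matrix (Fin d) (Fin d) ℂ) with hU
  have hUmem : U ∈ Matrix.unitaryGroup (Fin d) ℂ := hA.eigenvectorUnitary.2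
  have hUstar : star U ∈ Matrix.unitaryGroup (Fin d) ℂ := Unitary.star_mem hUmem
  have hspec : A = U * Matrix.diagonal (fun j => ((x j : ℝ) : ℂ)) * star U := by
    have := hA.spectral_theorem
    rw [Unitary.conjStarAlgAut_apply] at this
    exact this
  have hNA : N A = N (Matrix.diagonal (fun j => ((x j : ℝ) : ℂ))) := by
    rw [hspec]
    exact hinv U (star U) _ hUmem hUstar
  rw [hNA, hDdecomp]
  calc N (∑ i ∈ t, (θ i : ℂ) • (permU (σ i)⁻¹ * D * star (permU (σ i)⁻¹)))
      ≤ ∑ i ∈ t, N ((θ i : ℂ) • (permU (σ i)⁻¹ * D * star (permU (σ i)⁻¹))) :=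
        norm_sum_le' N hadd hsmul t _
    _ = ∑ i ∈ t, θ i * N D := by
        apply Finset.sum_congr rfl
        intro i hi
        rw [hsmul]
        rw [hinv _ _ _ (permU_mem _) (by rw [star_permU]; exact permU_mem _)]
        rw [Complex.norm_real, Real.norm_eq_abs, abs_of_nonneg (hθ0 i hi)]
    _ = N D := by
        rw [← Finset.sum_mul, hθ1, one_mul]


section Master

variable {d1 d2 : ℕ}

lemma star_kron (A : Matrix (Fin d1) (Fin d1) ℂ) (B : Matrix (Fin d2) (Fin d2) ℂ) :
    star (A ⊗ₖ B) = (star A) ⊗ₖ (star B) := by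
  ext p q
  simp only [Matrix.star_apply, Matrix.kroneckerMap_apply, star_mul']
  try ring

lemma kron_one_unitary {A : Matrix (Fin d1) (Fin d1) ℂ}
    (hA : A ∈ Matrix.unitaryGroup (Fin d1) ℂ) :
    A ⊗ₖ (1 : Matrix (Fin d2) (Fin d2) ℂ) ∈ Matrix.unitaryGroup (Fin d1 × Fin d2) ℂ := by
  rw [Matrix.mem_unitaryGroup_iff]
  rw [star_kron, star_one, ← Matrix.mul_kronecker_mul, Matrix.one_mul,
    Matrix.mem_unitaryGroup_iff.mp hA]
  exact Matrix.one_kronecker_one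

lemma block_psum (μ : Fin (d1 * d2) → ℝ) (k : ℕ) (hk : k ≤ d1) :
    psum (fun j : Fin d1 => ∑ s : Fin d2, μ (finProdFinEquiv (j, s))) k = psum μ (k * d2) := by
  unfold psum
  rw [eq_comm]
  have key : ∀ q : Fin d1 × Fin d2, ((finProdFinEquiv q : Fin (d1 * d2)) : ℕ) < k * d2 ↔
      ((q.1 : ℕ) < k) := by
    rintro ⟨j, s⟩
    simp only [finProdFinEquiv_apply_val]
    constructor
    · intro h
      by_contra hj
      push_neg at hj
      have : k * d2 ≤ d2 * (j : ℕ) := by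
        calc k * d2 ≤ (j : ℕ) * d2 := Nat.mul_le_mul_right d2 hj
          _ = d2 * (j : ℕ) := Nat.mul_comm _ _
      omega
    · intro h
      have hs := s.2
      calc (s : ℕ) + d2 * (j : ℕ) < d2 + d2 * (j : ℕ) := by omega
        _ = d2 * ((j : ℕ) + 1) := by ring
        _ ≤ d2 * k := Nat.mul_le_mul_left d2 (by omega)
        _ = k * d2 := Nat.mul_comm _ _
  calc ∑ m ∈ Finset.univ.filter (fun m : Fin (d1 * d2) => (m : ℕ) < k * d2), μ m
      = ∑ q ∈ Finset.univ.filter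
          (fun q : Fin d1 × Fin d2 => ((finProdFinEquiv q : Fin (d1*d2)) : ℕ) < k * d2),
          μ (finProdFinEquiv q) := by
        rw [eq_comm]
        apply Finset.sum_nbij' (fun q => finProdFinEquiv q) (fun m => finProdFinEquiv.symm m)
        · intro q hq
          simp only [Finset.mem_filter, Finset.mem_univ, true_and] at hq ⊢
          exact hq
        · intro m hm
          simp only [Finset.mem_filter, Finset.mem_univ, true_and] at hm ⊢
          rw [Equiv.apply_symm_apply]
          exact hm
        · intro q _; simp
        · intro m _; exact Equiv.apply_symm_apply _ _
        · intro q _; rfl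
      _ = ∑ q ∈ Finset.univ.filter (fun q : Fin d1 × Fin d2 => (q.1 : ℕ) < k),
          μ (finProdFinEquiv q) := by
        apply Finset.sum_congr _ (fun _ _ => rfl)
        ext q
        have := key q
        simp only [finProdFinEquiv_apply_val] at this
        simp only [Finset.mem_filter, Finset.mem_univ, true_and]
        exact this
      _ = ∑ j ∈ Finset.univ.filter (fun j : Fin d1 => (j : ℕ) < k),
          ∑ s : Fin d2, μ (finProdFinEquiv (j, s)) := by
        rw [Finset.sum_filter, Finset.sum_filter, Fintype.sum_prod_type]
        apply Finset.sum_congr rfl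
        intro j _
        by_cases h : (j : ℕ) < k <;> simp [h]

lemma trace_mul_kron_one (C : Matrix (Fin d1 × Fin d2) (Fin d1 × Fin d2) ℂ)
    (P : Matrix (Fin d1) (Fin d1) ℂ) :
    Matrix.trace (C * (P ⊗ₖ (1 : Matrix (Fin d2) (Fin d2) ℂ))) =
      Matrix.trace (ptrace2 C * P) := by
  classical
  simp only [Matrix.trace, Matrix.diag, Matrix.mul_apply, ptrace2, Matrix.of_apply,
    Matrix.kroneckerMap_apply, Matrix.one_apply, Fintype.sum_prod_type]
  apply Finset.sum_congr rfl
  intro i _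
  rw [Finset.sum_comm]
  apply Finset.sum_congr rfl
  intro j _
  rw [Finset.sum_mul]
  apply Finset.sum_congr rfl
  intro s _
  rw [Finset.sum_eq_single s]
  · simp
  · intro t _ hts
    simp [hts]
  · simp

lemma master (C : Matrix (Fin d1 × Fin d2) (Fin d1 × Fin d2) ℂ)
    (W : Matrix (Fin d1 × Fin d2) (Fin d1 × Fin d2) ℂ)
    (hW : W ∈ Matrix.unitaryGroup (Fin d1 × Fin d2) ℂ)
    (ν : Fin d1 × Fin d2 → ℝ)
    (hspec : C = W * Matrix.diagonal (fun p => ((ν p : ℝ) : ℂ)) * star W)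
    (μ : Fin (d1 * d2) → ℝ) (hμ : Antitone μ)
    (g : Fin (d1 * d2) ≃ Fin d1 × Fin d2) (hg : ∀ k, μ k = ν (g k))
    (N : Matrix (Fin d1) (Fin d1) ℂ → ℝ)
    (hadd : ∀ A B, N (A + B) ≤ N A + N B)
    (hsmul : ∀ (a : ℂ) A, N (a • A) = ‖a‖ * N A)
    (hinv : ∀ (U V A : Matrix (Fin d1) (Fin d1) ℂ), U ∈ Matrix.unitaryGroup (Fin d1) ℂ →
      V ∈ Matrix.unitaryGroup (Fin d1) ℂ → N (U * A * V) = N A) :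
    N (ptrace2 C) ≤
      N (Matrix.diagonal fun j : Fin d1 =>
          ((∑ s : Fin d2, μ (finProdFinEquiv (j, s)) : ℝ) : ℂ)) := by
  classical
  set A : Matrix (Fin d1) (Fin d1) ℂ := ptrace2 C with hAdef
  have hC : C.IsHermitian := by
    rw [hspec]
    have hdiag : (Matrix.diagonal (fun p : Fin d1 × Fin d2 => ((ν p : ℝ) : ℂ))).IsHermitian := by
      rw [Matrix.IsHermitian, Matrix.diagonal_conjTranspose]
      have : (star fun p : Fin d1 × Fin d2 => ((ν p : ℝ) : ℂ)) = fun p => ((ν p : ℝ) : ℂ) := by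
        funext p
        rw [Pi.star_apply]
        simp [Complex.star_def, Complex.conj_ofReal]
      rw [this]
    simpa [Matrix.star_eq_conjTranspose] using
      Matrix.isHermitian_mul_mul_conjTranspose W hdiag
  have hA : A.IsHermitian := by
    rw [Matrix.IsHermitian]
    ext i j
    simp only [hAdef, ptrace2, Matrix.conjTranspose_apply, Matrix.of_apply, star_sum]
    apply Finset.sum_congr rfl
    intro s _
    exact congrFun (congrFun hC (i, s)) (j, s)
  set w : Fin d1 → ℝ := fun j => ∑ s : Fin d2, μ (finProdFinEquiv (j, s)) with hwdef
  set x : Fin d1 → ℝ := hA.eigenvalues with hxdef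
  set Vm : Matrix (Fin d1) (Fin d1) ℂ := (hA.eigenvectorUnitary : Matrix (Fin d1) (Fin d1) ℂ)
    with hVmdef
  have hVm : Vm ∈ Matrix.unitaryGroup (Fin d1) ℂ := hA.eigenvectorUnitary.2
  -- total sums
  have hμtot : ∑ p : Fin d1 × Fin d2, ν p = ∑ k, μ k := by
    rw [← Equiv.sum_comp g ν]
    exact Finset.sum_congr rfl (fun k _ => (hg k).symm)
  have hwtot : ∑ j, w j = ∑ k, μ k := by
    have h1 : ∑ j, w j = ∑ q : Fin d1 × Fin d2, μ (finProdFinEquiv q) := by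
      rw [Fintype.sum_prod_type]
    rw [h1, Equiv.sum_comp finProdFinEquiv μ]
  have traceA : Matrix.trace A = ((∑ j, x j : ℝ) : ℂ) := by
    conv_lhs => rw [hA.spectral_theorem, Unitary.conjStarAlgAut_apply]
    rw [Matrix.trace_mul_cycle, Matrix.mem_unitaryGroup_iff'.mp hVm, Matrix.one_mul,
      Matrix.trace_diagonal]
    push_cast
    rfl
  have traceC : Matrix.trace C = ((∑ p, ν p : ℝ) : ℂ) := by
    conv_lhs => rw [hspec]
    rw [Matrix.trace_mul_cycle, Matrix.mem_unitaryGroup_iff'.mp hW, Matrix.one_mul,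
      Matrix.trace_diagonal]
    push_cast
    rfl
  have traceAC : Matrix.trace A = Matrix.trace C := by
    simp only [hAdef, Matrix.trace, Matrix.diag, ptrace2, Matrix.of_apply,
      Fintype.sum_prod_type]
  have hsum : ∑ j, x j = ∑ j, w j := by
    have : ((∑ j, x j : ℝ) : ℂ) = ((∑ j, w j : ℝ) : ℂ) := by
      rw [← traceA, traceAC, traceC, hwtot, hμtot]
    exact_mod_cast this
  -- majorization
  have hmaj : ∀ S : Finset (Fin d1), ∑ j ∈ S, x j ≤ psum w S.card := by
    intro S
    set E : Matrix (Fin d1) (Fin d1) ℂ :=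
      Matrix.diagonal (fun j => if j ∈ S then (1 : ℂ) else 0) with hEdef
    set Y : Matrix (Fin d1 × Fin d2) (Fin d1 × Fin d2) ℂ :=
      Vm ⊗ₖ (1 : Matrix (Fin d2) (Fin d2) ℂ) with hYdef
    have hY : Y ∈ Matrix.unitaryGroup (Fin d1 × Fin d2) ℂ := kron_one_unitary hVm
    set Z : Matrix (Fin d1 × Fin d2) (Fin d1 × Fin d2) ℂ := star W * Y with hZdef
    have hZ : Z ∈ Matrix.unitaryGroup (Fin d1 × Fin d2) ℂ :=
      mul_mem (Unitary.star_mem hW) hY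
    set t : (Fin d1 × Fin d2) → ℝ :=
      fun m => ∑ p : Fin d1 × Fin d2, (if p.1 ∈ S then (1:ℝ) else 0) * Complex.normSq (Z m p)
      with htdef
    -- row and column sums of |Z|²
    have hrow : ∀ m, ∑ p, Complex.normSq (Z m p) = 1 := by
      intro m
      have h1 : (Z * star Z) m m = 1 := by
        rw [Matrix.mem_unitaryGroup_iff.mp hZ]
        exact Matrix.one_apply_eq m
      have h2 : (Z * star Z) m m = ((∑ p, Complex.normSq (Z m p) : ℝ) : ℂ) := by
        rw [Matrix.mul_apply]
        push_cast
        apply Finset.sum_congr rfl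
        intro p _
        rw [Matrix.star_apply, Complex.star_def, Complex.mul_conj]
      rw [h2] at h1
      exact_mod_cast h1
    have hcol : ∀ p, ∑ m, Complex.normSq (Z m p) = 1 := by
      intro p
      have h1 : (star Z * Z) p p = 1 := by
        rw [Matrix.mem_unitaryGroup_iff'.mp hZ]
        exact Matrix.one_apply_eq p
      have h2 : (star Z * Z) p p = ((∑ m, Complex.normSq (Z m p) : ℝ) : ℂ) := by
        rw [Matrix.mul_apply]
        push_cast
        apply Finset.sum_congr rfl
        intro m _
        rw [Matrix.star_apply, Complex.star_def, mul_comm, Complex.mul_conj]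
      rw [h2] at h1
      exact_mod_cast h1
    have ht0 : ∀ m, 0 ≤ t m := by
      intro m
      apply Finset.sum_nonneg
      intro p _
      apply mul_nonneg _ (Complex.normSq_nonneg _)
      by_cases h : p.1 ∈ S <;> simp [h]
    have ht1 : ∀ m, t m ≤ 1 := by
      intro m
      rw [← hrow m]
      apply Finset.sum_le_sum
      intro p _
      by_cases h : p.1 ∈ S <;> simp [h, Complex.normSq_nonneg]
    have hts : ∑ m, t m = ((S.card * d2 : ℕ) : ℝ) := by
      rw [htdef, Finset.sum_comm]
      have : ∀ p : Fin d1 × Fin d2,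
          ∑ m, (if p.1 ∈ S then (1:ℝ) else 0) * Complex.normSq (Z m p)
            = (if p.1 ∈ S then (1:ℝ) else 0) := by
        intro p
        rw [← Finset.mul_sum, hcol p, mul_one]
      rw [Finset.sum_congr rfl (fun p _ => this p), Fintype.sum_prod_type]
      have h2 : ∀ j : Fin d1, (∑ _s : Fin d2, (if j ∈ S then (1:ℝ) else 0))
          = (if j ∈ S then (d2 : ℝ) else 0) := by
        intro j; by_cases h : j ∈ S <;> simp [h]
      rw [Finset.sum_congr rfl (fun j _ => h2 j), ← Finset.sum_filter,
        Finset.filter_mem_eq_inter, Finset.univ_inter, Finset.sum_const, nsmul_eq_mul]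
      push_cast
      ring
    -- the key trace identity
    set F : Matrix (Fin d1 × Fin d2) (Fin d1 × Fin d2) ℂ :=
      E ⊗ₖ (1 : Matrix (Fin d2) (Fin d2) ℂ) with hFdef
    set Dν : Matrix (Fin d1 × Fin d2) (Fin d1 × Fin d2) ℂ :=
      Matrix.diagonal (fun p => ((ν p : ℝ) : ℂ)) with hDνdef
    have hFdiag : F = Matrix.diagonal (fun p : Fin d1 × Fin d2 =>
        if p.1 ∈ S then (1 : ℂ) else 0) := by
      rw [hFdef, hEdef, ← Matrix.diagonal_one, Matrix.diagonal_kronecker_diagonal]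
      congr 1
      funext p
      by_cases h : p.1 ∈ S <;> simp [h]
    have e1 : Matrix.trace (Matrix.diagonal (RCLike.ofReal ∘ hA.eigenvalues) * E)
        = ((∑ j ∈ S, x j : ℝ) : ℂ) := by
      rw [hEdef, Matrix.diagonal_mul_diagonal, Matrix.trace_diagonal]
      have : ∀ j : Fin d1, (RCLike.ofReal ∘ hA.eigenvalues) j * (if j ∈ S then (1:ℂ) else 0)
          = (if j ∈ S then ((x j : ℝ) : ℂ) else 0) := by
        intro j
        by_cases h : j ∈ S <;> simp [h, hxdef]
      rw [Finset.sum_congr rfl (fun j _ => this j), ← Finset.sum_filter,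
        Finset.filter_mem_eq_inter, Finset.univ_inter]
      push_cast
      rfl
    have e2 : star Vm * A * Vm = Matrix.diagonal (RCLike.ofReal ∘ hA.eigenvalues) :=
      by simpa using hA.conjStarAlgAut_star_eigenvectorUnitary
    have e3 : Matrix.trace (A * (Vm * E * star Vm))
        = Matrix.trace (Matrix.diagonal (RCLike.ofReal ∘ hA.eigenvalues) * E) := by
      have h1 : A * (Vm * E * star Vm) = (A * Vm * E) * star Vm := by
        simp only [Matrix.mul_assoc]
      rw [h1, Matrix.trace_mul_comm]
      have h2 : star Vm * (A * Vm * E) = (star Vm * A * Vm) * E := by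
        simp only [Matrix.mul_assoc]
      rw [h2, e2]
    have e4 : Y * F * star Y =
        (Vm * E * star Vm) ⊗ₖ (1 : Matrix (Fin d2) (Fin d2) ℂ) := by
      rw [hYdef, hFdef, star_kron, star_one, ← Matrix.mul_kronecker_mul,
        ← Matrix.mul_kronecker_mul, Matrix.one_mul, Matrix.one_mul]
    have e5 : Matrix.trace (C * ((Vm * E * star Vm) ⊗ₖ (1 : Matrix (Fin d2) (Fin d2) ℂ)))
        = Matrix.trace (A * (Vm * E * star Vm)) := by
      rw [trace_mul_kron_one, hAdef]
    have e6 : star Z * Dν * Z = star Y * C * Y := by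
      rw [hZdef, hspec, hDνdef]
      simp only [StarMul.star_mul, star_star, Matrix.mul_assoc]
    have e7 : Matrix.trace (star Y * C * Y * F) = Matrix.trace (C * (Y * F * star Y)) := by
      have h1 : star Y * C * Y * F = star Y * (C * (Y * F)) := by
        simp only [Matrix.mul_assoc]
      rw [h1, Matrix.trace_mul_comm]
      have h2 : C * (Y * F) * star Y = C * (Y * F * star Y) := by
        simp only [Matrix.mul_assoc]
      rw [h2]
    have e8 : Matrix.trace (star Z * Dν * Z * F) = ∑ m, ((ν m : ℝ) : ℂ) * ((t m : ℝ) : ℂ) := by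
      have hM : star Z * Dν * Z * F = (star Z * (Dν * Z)) * F := by
        simp only [Matrix.mul_assoc]
      rw [hM, hFdiag]
      have htr : Matrix.trace ((star Z * (Dν * Z)) * Matrix.diagonal
          (fun p : Fin d1 × Fin d2 => if p.1 ∈ S then (1 : ℂ) else 0))
          = ∑ p, (star Z * (Dν * Z)) p p * (if p.1 ∈ S then (1:ℂ) else 0) := by
        rw [Matrix.trace]
        apply Finset.sum_congr rfl
        intro p _
        rw [Matrix.diag, Matrix.mul_diagonal]
      rw [htr]
      have hterm : ∀ p, (star Z * (Dν * Z)) p p * (if p.1 ∈ S then (1:ℂ) else 0)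
          = ∑ m, ((ν m : ℝ) : ℂ) * ((if p.1 ∈ S then (1:ℂ) else 0)
              * ((Complex.normSq (Z m p) : ℝ) : ℂ)) := by
        intro p
        rw [Matrix.mul_apply, Finset.sum_mul]
        apply Finset.sum_congr rfl
        intro m _
        rw [Matrix.star_apply, hDνdef, Matrix.diagonal_mul]
        have : star (Z m p) * (((ν m : ℝ) : ℂ) * Z m p) * (if p.1 ∈ S then (1:ℂ) else 0)
            = ((ν m : ℝ) : ℂ) * ((if p.1 ∈ S then (1:ℂ) else 0) * (Z m p * star (Z m p))) := by
          ring
        rw [this, Complex.star_def, Complex.mul_conj]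
      rw [Finset.sum_congr rfl (fun p _ => hterm p), Finset.sum_comm]
      apply Finset.sum_congr rfl
      intro m _
      rw [← Finset.mul_sum]
      congr 1
      rw [htdef]
      push_cast
      apply Finset.sum_congr rfl
      intro p _
      by_cases h : p.1 ∈ S <;> simp [h]
    have key : ((∑ j ∈ S, x j : ℝ) : ℂ) = ∑ m, ((ν m : ℝ) : ℂ) * ((t m : ℝ) : ℂ) := by
      calc ((∑ j ∈ S, x j : ℝ) : ℂ)
          = Matrix.trace (Matrix.diagonal (RCLike.ofReal ∘ hA.eigenvalues) * E) := e1.symm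
        _ = Matrix.trace (A * (Vm * E * star Vm)) := e3.symm
        _ = Matrix.trace (C * ((Vm * E * star Vm) ⊗ₖ (1 : Matrix (Fin d2) (Fin d2) ℂ))) :=
            e5.symm
        _ = Matrix.trace (C * (Y * F * star Y)) := by rw [e4]
        _ = Matrix.trace (star Y * C * Y * F) := e7.symm
        _ = Matrix.trace (star Z * Dν * Z * F) := by rw [e6]
        _ = ∑ m, ((ν m : ℝ) : ℂ) * ((t m : ℝ) : ℂ) := e8
    have keyR : ∑ j ∈ S, x j = ∑ m, ν m * t m := by
      have := key
      push_cast at this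
      exact_mod_cast this
    have step : ∑ m, ν m * t m = ∑ k, μ k * t (g k) := by
      rw [← Equiv.sum_comp g (fun m => ν m * t m)]
      exact Finset.sum_congr rfl (fun k _ => by rw [← hg k])
    have hKle : S.card * d2 ≤ d1 * d2 :=
      Nat.mul_le_mul_right d2 (le_trans (Finset.card_le_univ S) (by simp))
    have htsg : ∑ k, t (g k) = ((S.card * d2 : ℕ) : ℝ) := by
      rw [Equiv.sum_comp g t, hts]
    have := dot_le_topsum μ hμ (fun k => t (g k)) (fun k => ht0 _) (fun k => ht1 _)
      (S.card * d2) hKle htsg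
    rw [keyR, step]
    calc ∑ k, μ k * t (g k) ≤ psum μ (S.card * d2) := this
      _ = psum w S.card := (block_psum μ S.card (le_trans (Finset.card_le_univ S) (by simp))).symm
  exact norm_bound_of_major A hA w hmaj hsum N hadd hsmul hinv

end Master

theorem unitarily_invariant_norm_bound (d1 d2 : ℕ)
    (C : Matrix (Fin d1 × Fin d2) (Fin d1 × Fin d2) ℂ) (hC : C.IsHermitian)
    -- `μ` lists the eigenvalues of `C` in decreasing order
    (μ : Fin (d1 * d2) → ℝ) (hμ : Antitone μ)
    (g : Fin (d1 * d2) ≃ Fin d1 × Fin d2) (hg : ∀ k, μ k = hC.eigenvalues (g k)) :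
    (∀ N : Matrix (Fin d1) (Fin d1) ℂ → ℝ,
      (∀ A B, N (A + B) ≤ N A + N B) →
      (∀ (a : ℂ) A, N (a • A) = ‖a‖ * N A) →
      (∀ A, N A = 0 → A = 0) →
      (∀ (U V A : Matrix (Fin d1) (Fin d1) ℂ), U ∈ Matrix.unitaryGroup (Fin d1) ℂ →
        V ∈ Matrix.unitaryGroup (Fin d1) ℂ → N (U * A * V) = N A) →
      N (ptrace2 C) ≤
        N (Matrix.diagonal fun j : Fin d1 =>
            ((∑ s : Fin d2, μ (finProdFinEquiv (j, s)) : ℝ) : ℂ))) ∧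
    (∀ N : Matrix (Fin d2) (Fin d2) ℂ → ℝ,
      (∀ A B, N (A + B) ≤ N A + N B) →
      (∀ (a : ℂ) A, N (a • A) = ‖a‖ * N A) →
      (∀ A, N A = 0 → A = 0) →
      (∀ (U V A : Matrix (Fin d2) (Fin d2) ℂ), U ∈ Matrix.unitaryGroup (Fin d2) ℂ →
        V ∈ Matrix.unitaryGroup (Fin d2) ℂ → N (U * A * V) = N A) →
      N (ptrace1 C) ≤
        N (Matrix.diagonal fun i : Fin d2 =>
            ((∑ s : Fin d1, μ (finCongr (Nat.mul_comm d2 d1) (finProdFinEquiv (i, s))) : ℝ) : ℂ))) := by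
  have hspec1 : C = (hC.eigenvectorUnitary : Matrix (Fin d1 × Fin d2) (Fin d1 × Fin d2) ℂ) *
      Matrix.diagonal (fun p => ((hC.eigenvalues p : ℝ) : ℂ)) *
      star (hC.eigenvectorUnitary : Matrix (Fin d1 × Fin d2) (Fin d1 × Fin d2) ℂ) := by
    have := hC.spectral_theorem
    rwa [Unitary.conjStarAlgAut_apply] at this
  constructor
  · intro N hadd hsmul _hzero hinv
    exact master C _ hC.eigenvectorUnitary.2 hC.eigenvalues hspec1 μ hμ g hg N hadd hsmul hinv
  · intro N hadd hsmul _hzero hinv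
    set e : (Fin d2 × Fin d1) ≃ (Fin d1 × Fin d2) := Equiv.prodComm (Fin d2) (Fin d1) with hedef
    set C' : Matrix (Fin d2 × Fin d1) (Fin d2 × Fin d1) ℂ := C.submatrix ⇑e ⇑e with hC'def
    set W : Matrix (Fin d1 × Fin d2) (Fin d1 × Fin d2) ℂ :=
      (hC.eigenvectorUnitary : Matrix (Fin d1 × Fin d2) (Fin d1 × Fin d2) ℂ) with hWdef
    have hW : W ∈ Matrix.unitaryGroup (Fin d1 × Fin d2) ℂ := hC.eigenvectorUnitary.2
    set W' : Matrix (Fin d2 × Fin d1) (Fin d2 × Fin d1) ℂ := W.submatrix ⇑e ⇑e with hW'def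
    have hstarW' : star W' = (star W).submatrix ⇑e ⇑e := by
      rw [hW'def, Matrix.star_eq_conjTranspose, Matrix.star_eq_conjTranspose,
        Matrix.conjTranspose_submatrix]
    have hW'mem : W' ∈ Matrix.unitaryGroup (Fin d2 × Fin d1) ℂ := by
      rw [Matrix.mem_unitaryGroup_iff, hstarW', hW'def, Matrix.submatrix_mul_equiv,
        Matrix.mem_unitaryGroup_iff.mp hW, Matrix.submatrix_one_equiv]
    set ν' : Fin d2 × Fin d1 → ℝ := fun p => hC.eigenvalues (e p) with hν'def
    have hspec' : C' = W' * Matrix.diagonal (fun p => ((ν' p : ℝ) : ℂ)) * star W' := by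
      rw [hC'def, hspec1, hstarW', hW'def]
      rw [← Matrix.submatrix_mul_equiv
        ((W * Matrix.diagonal (fun p => ((hC.eigenvalues p : ℝ) : ℂ))))
        (star W) _ e _]
      rw [← Matrix.submatrix_mul_equiv W
        (Matrix.diagonal (fun p => ((hC.eigenvalues p : ℝ) : ℂ))) _ e _]
      rw [Matrix.submatrix_diagonal _ _ e.injective]
      rfl
    set μ'' : Fin (d2 * d1) → ℝ := fun k => μ (finCongr (Nat.mul_comm d2 d1) k) with hμ''def
    have hμ'' : Antitone μ'' := by
      intro k l hkl
      apply hμ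
      simp only [Fin.le_def] at hkl ⊢
      exact hkl
    set g'' : Fin (d2 * d1) ≃ (Fin d2 × Fin d1) :=
      (finCongr (Nat.mul_comm d2 d1)).trans (g.trans (Equiv.prodComm (Fin d1) (Fin d2)))
      with hg''def
    have hg'' : ∀ k, μ'' k = ν' (g'' k) := by
      intro k
      rw [hμ''def, hν'def, hg''def]
      simp only [Equiv.trans_apply, Equiv.prodComm_apply, Equiv.prodComm_apply, Prod.swap_swap,
        hedef]
      exact hg _
    have hpt : ptrace1 C = ptrace2 C' := by
      ext s u
      rfl
    have := master C' W' hW'mem ν' hspec' μ'' hμ'' g'' hg'' N hadd hsmul hinv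
    rw [hpt]
    exact this
end
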